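/- arXiv:2602.06747 — 4 statements merged into one kernel-verified Lean document; each statement's English description precedes it below -/
import Mathlib

section
/- For any hypergraph H = (V, E) and any positive integer k, the number of proper k-colorings of H equals the sum over all subsets S of E of (-1)^{|S|} · k^{|V| - n(S) + c(S)}, where n(S) is the number of vertices covered by edges in S and c(S) is the number of connected components of the subhypergraph (with vertex set the vertices covered by S) induced by S. -/
/-
Common definitions: a hypergraph on a finite vertex type `V` is given by its
edge set `E : Finset (Finset V)` (each edge of size ≥ 2).
-/

noncomputable section
open Finset

attribute [local instance] Classical.propDecidable

variable {V : Type*}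

/-- A proper `k`-coloring of the hypergraph with edge set `E`: every edge
contains two vertices with different colors. -/
def ProperColoring (E : Finset (Finset V)) (k : ℕ) (f : V → Fin k) : Prop :=
  ∀ e ∈ E, ∃ u ∈ e, ∃ v ∈ e, f u ≠ f v

/-- The number of proper `k`-colorings (the chromatic polynomial evaluated at `k`). -/
def chromPoly [Fintype V] (E : Finset (Finset V)) (k : ℕ) : ℕ :=
  Nat.card {f : V → Fin k // ProperColoring E k f}

/-- `n(S)`: the number of vertices covered by the edges of `S`. -/
def nVerts [DecidableEq V] (S : Finset (Finset V)) : ℕ := (S.biUnion id).card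

/-- One-step connectivity via an edge of `S`. -/
def connStep (S : Finset (Finset V)) (u v : V) : Prop := ∃ e ∈ S, u ∈ e ∧ v ∈ e

/-- Connectivity via a chain of edges of `S`. -/
def connRel (S : Finset (Finset V)) : V → V → Prop := Relation.ReflTransGen (connStep S)

/-- `c(S)`: the number of connected components of the subhypergraph induced by `S`
(on the vertices covered by `S`). -/
def nComps [DecidableEq V] (S : Finset (Finset V)) : ℕ :=
  Nat.card (Quot (fun a b : {v : V // v ∈ S.biUnion id} => connRel S a.1 b.1))

/-- The number of connected components of the spanning subhypergraph `(V, S)`. -/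
def nCompsFull (S : Finset (Finset V)) : ℕ := Nat.card (Quot (connRel S))

/-- A hypergraph is linear if two distinct edges meet in at most one vertex. -/
def Linear [DecidableEq V] (E : Finset (Finset V)) : Prop :=
  ∀ e ∈ E, ∀ e' ∈ E, e ≠ e' → (e ∩ e').card ≤ 1

/-- `r`-uniform: every edge has exactly `r` vertices. -/
def Uniform (E : Finset (Finset V)) (r : ℕ) : Prop := ∀ e ∈ E, e.card = r

/-- The hypergraph `(V, E)` is connected. -/
def Connected (E : Finset (Finset V)) : Prop := ∀ u v : V, connRel E u v

/-- There is a cycle of length `p` with all edges drawn from `D`: distinct vertices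
`v_1, …, v_p` and distinct edges `e_1, …, e_p` with `{v_{i-1}, v_i} ⊆ e_i` (cyclically). -/
def IsCycle (D : Finset (Finset V)) (p : ℕ) : Prop :=
  2 ≤ p ∧ ∃ (vs : ZMod p → V) (es : ZMod p → Finset V),
    Function.Injective vs ∧ Function.Injective es ∧
    ∀ i, es i ∈ D ∧ vs i ∈ es i ∧ vs i ∈ es (i + 1)

/-- There is a cycle of length `p` through the edge `e`, with all edges drawn from `D`. -/
def CycleThrough (D : Finset (Finset V)) (e : Finset V) (p : ℕ) : Prop :=
  2 ≤ p ∧ ∃ (vs : ZMod p → V) (es : ZMod p → Finset V),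
    Function.Injective vs ∧ Function.Injective es ∧ (∃ i, es i = e) ∧
    ∀ i, es i ∈ D ∧ vs i ∈ es i ∧ vs i ∈ es (i + 1)

/-- The domain of a partial map `V ⇀ Fin k`. -/
def pmDom [Fintype V] {k : ℕ} (φ : V → Option (Fin k)) : Finset V :=
  univ.filter (fun v => (φ v).isSome)

/-- `F` is a `k`-fold cover of the hypergraph with edge set `E`: domains are edges, and
distinct members with the same domain are disjoint as sets of (vertex, color) pairs. -/
def IsCover [Fintype V] (E : Finset (Finset V)) (k : ℕ)
    (F : Finset (V → Option (Fin k))) : Prop :=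
  (∀ φ ∈ F, pmDom φ ∈ E) ∧
    ∀ φ ∈ F, ∀ ψ ∈ F, φ ≠ ψ → pmDom φ = pmDom ψ → ∀ v c, φ v = some c → ψ v ≠ some c

/-- `φ ⊆ f` as graphs of partial maps. -/
def SubMap {k : ℕ} (φ : V → Option (Fin k)) (f : V → Fin k) : Prop :=
  ∀ v c, φ v = some c → f v = c

/-- The number of `F`-colorings: total colorings avoiding every member of `F`. -/
def dpCount [Fintype V] (k : ℕ) (F : Finset (V → Option (Fin k))) : ℕ :=
  Nat.card {f : V → Fin k // ∀ φ ∈ F, ¬ SubMap φ f}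

/-- The DP color function: the minimum of `dpCount` over all `k`-fold covers. -/
def dpPoly [Fintype V] (E : Finset (Finset V)) (k : ℕ) : ℕ :=
  sInf {n | ∃ F, IsCover E k F ∧ n = dpCount k F}

/-- The natural `k`-cover: for each edge `e` and color `i`, the constant map `e ↦ i`. -/
def natCover [Fintype V] [DecidableEq V] (E : Finset (Finset V)) (k : ℕ) :
    Finset (V → Option (Fin k)) :=
  E.biUnion fun e => (univ : Finset (Fin k)).image fun i v => if v ∈ e then some i else none

/-- The join `H ∨ K_p`, realized on the vertex type `V ⊕ Fin p`. -/
def joinK [Fintype V] [DecidableEq V] (E : Finset (Finset V)) (p : ℕ) :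
    Finset (Finset (V ⊕ Fin p)) :=
  E.image (Finset.image Sum.inl) ∪
    (univ : Finset (V × Fin p)).image (fun x => {Sum.inl x.1, Sum.inr x.2}) ∪
    ((univ : Finset (Fin p × Fin p)).filter (fun x => x.1 ≠ x.2)).image
      (fun x => ({Sum.inr x.1, Sum.inr x.2} : Finset (V ⊕ Fin p)))

/-- The join `K₁ ∨ H`, realized on `Option V` with new vertex `none`. -/
def joinOne [Fintype V] [DecidableEq V] (E : Finset (Finset V)) : Finset (Finset (Option V)) :=
  E.image (Finset.image some) ∪
    (univ : Finset V).image (fun v => ({none, some v} : Finset (Option V)))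

/-- The number of neighbors of `σ i` among `σ j`, `j < i`. -/
def backDeg [Fintype V] (E : Finset (Finset V)) (σ : Fin (Fintype.card V) ≃ V)
    (i : Fin (Fintype.card V)) : ℕ :=
  (univ.filter fun j => j < i ∧ σ j ≠ σ i ∧ ∃ e ∈ E, σ i ∈ e ∧ σ j ∈ e).card

/-- There is an ordering witnessing coloring number at most `d`. -/
def HasColOrd [Fintype V] (E : Finset (Finset V)) (d : ℕ) : Prop :=
  ∃ σ : Fin (Fintype.card V) ≃ V, ∀ i, backDeg E σ i ≤ d - 1

/-- The coloring number `col(H)`. -/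
def colNum [Fintype V] (E : Finset (Finset V)) : ℕ := sInf {d | HasColOrd E d}

/-- `Φ_j` is a level mapping for the cover `F` of `K₁ ∨ H`: for each original edge `e`
there is a member of `F` with domain `e` agreeing, at every vertex of `e`, with the
member of `F` on the edge `{w, v}` sending `w = none` to `j`. -/
def LevelMap [Fintype V] [DecidableEq V] (E : Finset (Finset V)) (k : ℕ)
    (F : Finset (Option V → Option (Fin k))) (j : Fin k) : Prop :=
  ∀ e ∈ E, ∃ ψ ∈ F, pmDom ψ = e.image some ∧
    ∀ v ∈ e, ∀ φ ∈ F,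
      (pmDom φ = ({none, some v} : Finset (Option V)) ∧ φ none = some j) →
        ψ (some v) = φ (some v)


lemma connRel_const {k : ℕ} {S : Finset (Finset V)} {f : V → Fin k}
    (hf : ∀ e ∈ S, ∀ u ∈ e, ∀ v ∈ e, f u = f v) {u v : V} (h : connRel S u v) :
    f u = f v := by
  induction h with
  | refl => rfl
  | tail _ step ih =>
    obtain ⟨e, he, hu, hv⟩ := step
    exact ih.trans (hf e he _ hu _ hv)

lemma count_mono [Fintype V] [DecidableEq V] (S : Finset (Finset V)) (k : ℕ) :
    Nat.card {f : V → Fin k // ∀ e ∈ S, ∀ u ∈ e, ∀ v ∈ e, f u = f v}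
      = k ^ (Fintype.card V - nVerts S + nComps S) := by
  classical
  set r : {v : V // v ∈ S.biUnion id} → {v : V // v ∈ S.biUnion id} → Prop :=
    fun a b => connRel S a.1 b.1 with hr
  have hsurj : Function.Surjective (Quot.mk r) := Quot.exists_rep
  haveI : Finite (Quot r) := Finite.of_surjective _ hsurj
  have hmemU : ∀ {e : Finset V} (_ : e ∈ S) {u : V} (_ : u ∈ e), u ∈ S.biUnion id := by
    intro e he u hu
    exact Finset.mem_biUnion.2 ⟨e, he, hu⟩
  let eqv : {f : V → Fin k // ∀ e ∈ S, ∀ u ∈ e, ∀ v ∈ e, f u = f v} ≃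
      (Quot r → Fin k) × ({v : V // v ∉ S.biUnion id} → Fin k) :=
    { toFun := fun f =>
        ⟨Quot.lift (fun a => f.1 a.1) (fun a b h => connRel_const f.2 h),
          fun v => f.1 v.1⟩
      invFun := fun p =>
        ⟨fun v => if hv : v ∈ S.biUnion id then p.1 (Quot.mk r ⟨v, hv⟩) else p.2 ⟨v, hv⟩, by
          intro e he u hu v hv
          have hu' := hmemU he hu
          have hv' := hmemU he hv
          dsimp only
          rw [dif_pos hu', dif_pos hv']
          have hcr : connRel S u v := Relation.ReflTransGen.single ⟨e, he, hu, hv⟩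
          exact congrArg p.1 (Quot.sound hcr)⟩
      left_inv := by
        intro f
        ext v
        dsimp only
        by_cases hv : v ∈ S.biUnion id
        · rw [dif_pos hv]
        · rw [dif_neg hv]
      right_inv := by
        intro p
        refine Prod.ext ?_ ?_
        · funext q
          induction q using Quot.ind with
          | mk a =>
            dsimp only
            rw [dif_pos a.2]
        · funext v
          dsimp only
          rw [dif_neg v.2] }
  rw [Nat.card_eq_of_bijective eqv eqv.bijective, Nat.card_prod, Nat.card_fun, Nat.card_fun]
  have h1 : Nat.card (Quot r) = nComps S := rfl
  have h2 : Nat.card {v : V // v ∉ S.biUnion id} = Fintype.card V - nVerts S := by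
    rw [Nat.card_eq_fintype_card, Fintype.card_subtype_compl]
    congr 1
    rw [nVerts, ← Fintype.card_coe]
  rw [Nat.card_eq_fintype_card, Fintype.card_fin, h1, h2, ← pow_add, add_comm]

/-- Whitney-type expansion of the chromatic polynomial of a hypergraph. -/
theorem stmt0 [Fintype V] [DecidableEq V] [Nonempty V] (E : Finset (Finset V))
    (hE : ∀ e ∈ E, 2 ≤ e.card) (k : ℕ) (hk : 0 < k) :
    (chromPoly E k : ℤ) =
      ∑ S ∈ E.powerset,
        (-1) ^ S.card * (k : ℤ) ^ (Fintype.card V - nVerts S + nComps S) := by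
  classical
  have hchrom : (chromPoly E k : ℤ) =
      ∑ f : V → Fin k, (if ProperColoring E k f then (1 : ℤ) else 0) := by
    rw [chromPoly, Nat.card_eq_fintype_card, Fintype.card_subtype]
    push_cast [Finset.card_filter]
    rfl
  have key : ∀ f : V → Fin k,
      (if ProperColoring E k f then (1 : ℤ) else 0) =
        ∑ S ∈ E.powerset,
          (if ∀ e ∈ S, ∀ u ∈ e, ∀ v ∈ e, f u = f v then (-1 : ℤ) ^ S.card else 0) := by
    intro f
    set B : Finset (Finset V) := E.filter (fun e => ∀ u ∈ e, ∀ v ∈ e, f u = f v) with hB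
    have hsub : B ⊆ E := Finset.filter_subset _ _
    have step1 : ∑ S ∈ E.powerset,
        (if ∀ e ∈ S, ∀ u ∈ e, ∀ v ∈ e, f u = f v then (-1 : ℤ) ^ S.card else 0)
        = ∑ S ∈ B.powerset, (-1 : ℤ) ^ S.card := by
      rw [← Finset.sum_filter]
      apply Finset.sum_congr
      · ext S
        simp only [Finset.mem_filter, Finset.mem_powerset]
        constructor
        · rintro ⟨hSE, hmono⟩
          intro e he
          exact Finset.mem_filter.2 ⟨hSE he, hmono e he⟩
        · intro hSB
          exact ⟨hSB.trans hsub, fun e he => (Finset.mem_filter.1 (hSB he)).2⟩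
      · intro _ _; rfl
    rw [step1, Finset.sum_powerset_neg_one_pow_card]
    have hBempty : B = ∅ ↔ ProperColoring E k f := by
      rw [Finset.eq_empty_iff_forall_notMem]
      constructor
      · intro h e he
        have := h e
        rw [Finset.mem_filter] at this
        push_neg at this
        obtain ⟨u, hu, v, hv, huv⟩ := this he
        exact ⟨u, hu, v, hv, huv⟩
      · intro h e he
        rw [Finset.mem_filter] at he
        obtain ⟨u, hu, v, hv, huv⟩ := h e he.1
        exact huv (he.2 u hu v hv)
    by_cases hp : ProperColoring E k f
    · rw [if_pos hp, if_pos (hBempty.2 hp)]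
    · rw [if_neg hp, if_neg (fun h => hp (hBempty.1 h))]
  rw [hchrom]
  simp_rw [key]
  rw [Finset.sum_comm]
  apply Finset.sum_congr rfl
  intro S _
  rw [← Finset.sum_filter, Finset.sum_const, nsmul_eq_mul]
  have hcount : (Finset.univ.filter fun f : V → Fin k =>
      ∀ e ∈ S, ∀ u ∈ e, ∀ v ∈ e, f u = f v).card
      = k ^ (Fintype.card V - nVerts S + nComps S) := by
    rw [← count_mono S k, Nat.card_eq_fintype_card, Fintype.card_subtype]
  rw [hcount]
  push_cast
  ring
end
end

section
/- Let H be a connected r-uniform linear hypergraph with n vertices, m edges, and even girth z, and let t ≥ 1 be the number of cycles of length z in H. Then the polynomial D(k) := P(H, k) − k^{n − (r−1)m} (k^{r−1} − 1)^m has leading term t · k^{n − z(r−1) + 1}; in particular there exists N ∈ ℕ such that D(k) > 0 for all integers k ≥ N. -/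
/-
Common definitions: a hypergraph on a finite vertex type `V` is given by its
edge set `E : Finset (Finset V)` (each edge of size ≥ 2).
-/

noncomputable section
open Finset

attribute [local instance] Classical.propDecidable

variable {V : Type*}

section AuxLemmas
variable {V : Type*} [Fintype V] [DecidableEq V]
variable {S T : Finset (Finset V)} {u v : V}

lemma connStep_symm : Symmetric (connStep S) := by
  rintro u v ⟨e, he, hu, hv⟩; exact ⟨e, he, hv, hu⟩

lemma connRel_symm : Symmetric (connRel S) :=
  by haveI : Std.Symm (connStep S) := ⟨fun a b h => connStep_symm h⟩; exact fun a b h => (Relation.ReflTransGen.stdSymm (r := connStep S)).symm a b h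

lemma connRel_equivalence (S : Finset (Finset V)) : Equivalence (connRel S) :=
  ⟨fun _ => .refl, fun h => connRel_symm h, fun h h' => h.trans h'⟩

lemma quotMk_eq_iff {S : Finset (Finset V)} {u v : V} :
    Quot.mk (connRel S) u = Quot.mk (connRel S) v ↔ connRel S u v := by
  rw [Quot.eq]; exact (connRel_equivalence S).eqvGen_iff

lemma connRel_mono (h : S ⊆ T) (h' : connRel S u v) : connRel T u v :=
  Relation.ReflTransGen.mono (fun a b (hx : connStep S a b) =>
    (let ⟨e, he, h1, h2⟩ := hx; ⟨e, h he, h1, h2⟩ : connStep T a b)) u v h'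

lemma eq_of_connRel_of_not_covered (hw : u ∉ S.biUnion id) (h : connRel S u v) : u = v := by
  rcases h.cases_head with h | ⟨c, ⟨e, he, hu, _⟩, _⟩
  · exact h
  · exact absurd (Finset.mem_biUnion.mpr ⟨e, he, hu⟩) hw

lemma connRel_insert_iff {e : Finset V} :
    connRel (insert e S) u v ↔
      connRel S u v ∨ ((∃ a ∈ e, connRel S u a) ∧ ∃ b ∈ e, connRel S b v) := by
  constructor
  · intro h
    induction h with
    | refl => exact Or.inl .refl
    | tail h1 h2 ih =>
      obtain ⟨g, hg, hw, hv⟩ := h2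
      rcases Finset.mem_insert.mp hg with rfl | hgS
      · rcases ih with h | ⟨⟨a, ha, hua⟩, _⟩
        · exact Or.inr ⟨⟨_, hw, h⟩, _, hv, .refl⟩
        · exact Or.inr ⟨⟨a, ha, hua⟩, _, hv, .refl⟩
      · rcases ih with h | ⟨h1, b, hb, hbv⟩
        · exact Or.inl (h.tail ⟨g, hgS, hw, hv⟩)
        · exact Or.inr ⟨h1, b, hb, hbv.tail ⟨g, hgS, hw, hv⟩⟩
  · rintro (h | ⟨⟨a, ha, hua⟩, b, hb, hbv⟩)
    · exact connRel_mono (subset_insert _ _) h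
    · exact (((connRel_mono (subset_insert _ _) hua).tail
        ⟨e, mem_insert_self _ _, ha, hb⟩).trans (connRel_mono (subset_insert _ _) hbv))

variable [Fintype V]

lemma nCompsFull_empty : nCompsFull (∅ : Finset (Finset V)) = Fintype.card V := by
  have hinj : Function.Injective (Quot.mk (connRel (∅ : Finset (Finset V)))) := by
    intro u v h
    rcases (quotMk_eq_iff.mp h).cases_head with h | ⟨c, ⟨e, he, _⟩, _⟩
    · exact h
    · exact absurd he (Finset.notMem_empty e)
  rw [nCompsFull, ← Nat.card_eq_fintype_card]
  exact (Nat.card_congr (Equiv.ofBijective _ ⟨hinj, Quot.mk_surjective⟩)).symm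

lemma nCompsFull_insert (S : Finset (Finset V)) {e : Finset V} (hne : e.Nonempty) :
    nCompsFull S + 1 = nCompsFull (insert e S) + (e.image (Quot.mk (connRel S))).card := by
  classical
  letI : Fintype (Quot (connRel S)) := Fintype.ofFinite _
  letI : Fintype (Quot (connRel (insert e S))) := Fintype.ofFinite _
  set π : Quot (connRel S) → Quot (connRel (insert e S)) :=
    Quot.map id (fun a b h => connRel_mono (subset_insert _ _) h) with hπ
  have hπmk : ∀ x : V, π (Quot.mk _ x) = Quot.mk _ x := fun x => rfl
  set A : Finset (Quot (connRel S)) := e.image (Quot.mk _) with hA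
  have key1 : ∀ x y, π x = π y → x = y ∨ (x ∈ A ∧ y ∈ A) := by
    intro x y
    induction x using Quot.ind with | _ a =>
    induction y using Quot.ind with | _ b =>
    intro h
    rw [hπmk, hπmk, quotMk_eq_iff, connRel_insert_iff] at h
    rcases h with h | ⟨⟨a', ha', haa'⟩, b', hb', hbb'⟩
    · exact Or.inl (quotMk_eq_iff.mpr h)
    · exact Or.inr ⟨Finset.mem_image.mpr ⟨a', ha', (quotMk_eq_iff.mpr haa').symm⟩,
        Finset.mem_image.mpr ⟨b', hb', quotMk_eq_iff.mpr hbb'⟩⟩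
  have key2 : ∀ x ∈ A, ∀ y ∈ A, π x = π y := by
    intro x hx y hy
    obtain ⟨a, ha, rfl⟩ := Finset.mem_image.mp hx
    obtain ⟨b, hb, rfl⟩ := Finset.mem_image.mp hy
    rw [hπmk, hπmk, quotMk_eq_iff]
    exact Relation.ReflTransGen.single ⟨e, mem_insert_self _ _, ha, hb⟩
  obtain ⟨a0, ha0⟩ := hne
  have hx0 : Quot.mk (connRel S) a0 ∈ A := Finset.mem_image.mpr ⟨a0, ha0, rfl⟩
  set B : Finset (Quot (connRel S)) := univ \ A with hB
  have hcover : (univ : Finset (Quot (connRel (insert e S)))) =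
      B.image π ∪ {π (Quot.mk _ a0)} := by
    apply le_antisymm
    · intro q _
      induction q using Quot.ind with | _ w =>
      by_cases hw : Quot.mk (connRel S) w ∈ A
      · exact Finset.mem_union.mpr (Or.inr (by
          simp only [Finset.mem_singleton]
          exact (key2 _ hw _ hx0 : _)))
      · exact Finset.mem_union.mpr (Or.inl (Finset.mem_image.mpr
          ⟨_, Finset.mem_sdiff.mpr ⟨mem_univ _, hw⟩, rfl⟩))
    · intro q _; exact mem_univ q
  have hdisj : π (Quot.mk _ a0) ∉ B.image π := by
    intro h
    obtain ⟨y, hy, hyx⟩ := Finset.mem_image.mp h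
    rcases key1 _ _ hyx with rfl | ⟨hy', _⟩
    · exact (Finset.mem_sdiff.mp hy).2 hx0
    · exact (Finset.mem_sdiff.mp hy).2 hy'
  have hinjB : Set.InjOn π B := by
    intro x hx y hy h
    rcases key1 _ _ h with h | ⟨hx', _⟩
    · exact h
    · exact absurd hx' (Finset.mem_sdiff.mp hx).2
  have hcard1 : Fintype.card (Quot (connRel (insert e S))) = B.card + 1 := by
    rw [← Finset.card_univ, hcover, Finset.card_union_of_disjoint
      (Finset.disjoint_singleton_right.mpr hdisj), Finset.card_image_of_injOn hinjB,
      Finset.card_singleton]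
  have hcard2 : Fintype.card (Quot (connRel S)) = A.card + B.card := by
    rw [← Finset.card_univ, hB, Finset.card_sdiff_of_subset (Finset.subset_univ A)]
    have := Finset.card_le_card (Finset.subset_univ A)
    omega
  rw [nCompsFull, nCompsFull, Nat.card_eq_fintype_card, Nat.card_eq_fintype_card,
    hcard1, hcard2]
  omega


def exZ (r : ℕ) (S : Finset (Finset V)) : ℤ :=
  ((r - 1 : ℕ) : ℤ) * S.card + nCompsFull S - Fintype.card V

lemma exZ_empty (r : ℕ) : exZ r (∅ : Finset (Finset V)) = 0 := by
  simp [exZ, nCompsFull_empty]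

lemma exZ_insert {r : ℕ} (hr : 2 ≤ r) {S : Finset (Finset V)} {e : Finset V}
    (he : e ∉ S) (hec : e.card = r) :
    exZ r (insert e S) =
      exZ r S + ((r - 1 : ℕ) : ℤ) + 1 - (e.image (Quot.mk (connRel S))).card := by
  have hne : e.Nonempty := Finset.card_pos.mp (by omega)
  have h6 := nCompsFull_insert S hne
  unfold exZ
  rw [Finset.card_insert_of_notMem he]
  have : ((nCompsFull S : ℤ) + 1 = nCompsFull (insert e S) +
      (e.image (Quot.mk (connRel S))).card) := by exact_mod_cast h6
  push_cast
  linarith [this]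

lemma image_quotMk_card_pos {S : Finset (Finset V)} {e : Finset V} (hne : e.Nonempty) :
    1 ≤ (e.image (Quot.mk (connRel S))).card :=
  Finset.card_pos.mpr (hne.image _)

lemma image_quotMk_card_le {S : Finset (Finset V)} {e : Finset V} :
    (e.image (Quot.mk (connRel S))).card ≤ e.card := Finset.card_image_le

lemma exZ_insert_ge {r : ℕ} (hr : 2 ≤ r) {S : Finset (Finset V)} {e : Finset V}
    (he : e ∉ S) (hec : e.card = r) : exZ r S ≤ exZ r (insert e S) := by
  rw [exZ_insert hr he hec]
  have h1 : (e.image (Quot.mk (connRel S))).card ≤ r := hec ▸ image_quotMk_card_le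
  have : ((e.image (Quot.mk (connRel S))).card : ℤ) ≤ r := by exact_mod_cast h1
  have hr1 : ((r - 1 : ℕ) : ℤ) = (r : ℤ) - 1 := by
    have : 1 ≤ r := by omega
    push_cast [this]; ring
  omega

lemma exZ_mono {r : ℕ} (hr : 2 ≤ r) {E : Finset (Finset V)} (hunif : ∀ e ∈ E, e.card = r) :
    ∀ {S U : Finset (Finset V)}, S ⊆ U → U ⊆ E → exZ r S ≤ exZ r U := by
  have key : ∀ N : ℕ, ∀ S U : Finset (Finset V), U.card ≤ N → S ⊆ U → U ⊆ E →
      exZ r S ≤ exZ r U := by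
    intro N
    induction N with
    | zero => intro S U hc hSU hUE
              have : U = ∅ := Finset.card_eq_zero.mp (by omega)
              subst this
              rw [Finset.subset_empty.mp hSU]
    | succ N ih =>
      intro S U hc hSU hUE
      by_cases heq : S = U
      · subst heq; exact le_refl _
      · obtain ⟨a, haU, haS⟩ := Finset.exists_of_ssubset (hSU.ssubset_of_ne heq)
        have hSU' : S ⊆ U.erase a := fun x hx =>
          Finset.mem_erase.mpr ⟨fun h => haS (h ▸ hx), hSU hx⟩
        have h1 : exZ r S ≤ exZ r (U.erase a) := by
          apply ih _ _ _ hSU' ((Finset.erase_subset _ _).trans hUE)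
          have := Finset.card_erase_of_mem haU
          omega
        have h2 : exZ r (U.erase a) ≤ exZ r U := by
          conv_rhs => rw [← Finset.insert_erase haU]
          exact exZ_insert_ge hr (Finset.notMem_erase _ _) (hunif a (hUE haU))
        exact h1.trans h2
  intro S U hSU hUE; exact key U.card S U le_rfl hSU hUE

lemma exZ_nonneg {r : ℕ} (hr : 2 ≤ r) {E : Finset (Finset V)} (hunif : ∀ e ∈ E, e.card = r)
    {S : Finset (Finset V)} (hS : S ⊆ E) : 0 ≤ exZ r S := by
  have := exZ_mono hr hunif (Finset.empty_subset S) (hS.trans (le_refl E))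
  rwa [exZ_empty] at this

/-- `c(S) ≥ n - |covered| + 1` when something is covered. -/
lemma nCompsFull_ge (S : Finset (Finset V)) {w0 : V} (hw0 : w0 ∈ S.biUnion id) :
    Fintype.card V + 1 ≤ nCompsFull S + (S.biUnion id).card := by
  classical
  letI : Fintype (Quot (connRel S)) := Fintype.ofFinite _
  set U : Finset V := univ \ S.biUnion id with hU
  have hinj : Set.InjOn (Quot.mk (connRel S)) U := by
    intro x hx y hy h
    exact eq_of_connRel_of_not_covered (Finset.mem_sdiff.mp hx).2 (quotMk_eq_iff.mp h)
  have hnotmem : Quot.mk (connRel S) w0 ∉ U.image (Quot.mk (connRel S)) := by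
    intro h
    obtain ⟨y, hy, hyx⟩ := Finset.mem_image.mp h
    have := eq_of_connRel_of_not_covered (Finset.mem_sdiff.mp hy).2 (quotMk_eq_iff.mp hyx)
    exact (Finset.mem_sdiff.mp hy).2 (this ▸ hw0)
  have hsub : insert (Quot.mk (connRel S) w0) (U.image (Quot.mk (connRel S))) ⊆ univ :=
    Finset.subset_univ _
  have hcard : U.card + 1 ≤ Fintype.card (Quot (connRel S)) := by
    calc U.card + 1 = (insert (Quot.mk (connRel S) w0) (U.image (Quot.mk (connRel S)))).card := by
          rw [Finset.card_insert_of_notMem hnotmem, Finset.card_image_of_injOn hinj]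
      _ ≤ _ := by rw [← Finset.card_univ]; exact Finset.card_le_card hsub
  have hUcard : U.card = Fintype.card V - (S.biUnion id).card := by
    rw [hU, Finset.card_sdiff_of_subset (Finset.subset_univ _), Finset.card_univ]
  have hle : (S.biUnion id).card ≤ Fintype.card V := by
    rw [← Finset.card_univ]; exact Finset.card_le_card (Finset.subset_univ _)
  rw [nCompsFull, Nat.card_eq_fintype_card]
  omega


def IsWalk (S : Finset (Finset V)) (x : ℕ → V) (f : ℕ → Finset V) (l : ℕ) : Prop :=
  ∀ k < l, f k ∈ S ∧ x k ∈ f k ∧ x (k+1) ∈ f k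

def HasWalk (S : Finset (Finset V)) (u v : V) (l : ℕ) : Prop :=
  ∃ x f, x 0 = u ∧ x l = v ∧ IsWalk S x f l

lemma connRel_of_hasWalk {l : ℕ} (h : HasWalk S u v l) : connRel S u v := by
  obtain ⟨x, f, hx0, hxl, hw⟩ := h
  subst hx0; subst hxl
  induction l with
  | zero => exact .refl
  | succ n ih =>
    have h1 : IsWalk S x f n := fun k hk => hw k (by omega)
    have h2 := hw n (by omega)
    exact (ih h1).tail ⟨f n, h2.1, h2.2.1, h2.2.2⟩

lemma connRel_iff_hasWalk : connRel S u v ↔ ∃ l, HasWalk S u v l := by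
  constructor
  · intro h
    induction h with
    | refl => exact ⟨0, fun _ => u, fun _ => ∅, rfl, rfl, fun k hk => absurd hk (by omega)⟩
    | @tail b c h1 h2 ih =>
      obtain ⟨l, x, f, hx0, hxl, hw⟩ := ih
      obtain ⟨g, hg, hw1, hw2⟩ := h2
      refine ⟨l+1, fun k => if k = l+1 then c else x k,
        fun k => if k = l then g else f k,
        by simp only [if_neg (by omega : (0:ℕ) ≠ l+1)]; exact hx0, by simp, ?_⟩
      intro k hk
      rcases (by omega : k < l ∨ k = l) with hkl | rfl
      · simp only [if_neg (by omega : k ≠ l+1), if_neg (by omega : k ≠ l),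
          if_neg (by omega : k+1 ≠ l+1)]
        exact hw k hkl
      · simp only [if_pos rfl, if_neg (by omega : k ≠ k+1)]
        exact ⟨hg, hxl ▸ hw1, hw2⟩
  · rintro ⟨l, h⟩; exact connRel_of_hasWalk h

lemma hasWalk_symm {l : ℕ} (h : HasWalk S u v l) : HasWalk S v u l := by
  obtain ⟨x, f, hx0, hxl, hw⟩ := h
  refine ⟨fun k => x (l - k), fun k => f (l - 1 - k), by simpa, by simpa, ?_⟩
  intro k hk
  have h1 : l - 1 - k < l := by omega
  obtain ⟨hf, hm1, hm2⟩ := hw (l - 1 - k) h1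
  refine ⟨hf, ?_, ?_⟩
  · show x (l - k) ∈ f (l - 1 - k)
    have : l - k = (l - 1 - k) + 1 := by omega
    rw [this]; exact hm2
  · show x (l - (k+1)) ∈ f (l - 1 - k)
    have : l - (k+1) = l - 1 - k := by omega
    rw [this]; exact hm1

lemma isWalk_reverse {x : ℕ → V} {f : ℕ → Finset V} {l : ℕ} (hw : IsWalk S x f l) :
    IsWalk S (fun k => x (l - k)) (fun k => f (l - 1 - k)) l := by
  intro k hk
  have h1 : l - 1 - k < l := by omega
  obtain ⟨hf, hm1, hm2⟩ := hw (l - 1 - k) h1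
  refine ⟨hf, ?_, ?_⟩
  · show x (l - k) ∈ f (l - 1 - k)
    have h2 : l - k = (l - 1 - k) + 1 := by omega
    rw [h2]; exact hm2
  · show x (l - (k+1)) ∈ f (l - 1 - k)
    have h2 : l - (k+1) = l - 1 - k := by omega
    rw [h2]; exact hm1

lemma hasWalk_to_mem {x : ℕ → V} {f : ℕ → Finset V} {l : ℕ} (hw : IsWalk S x f l)
    {k : ℕ} {y : V} (hk : k < l) (hy : y ∈ f k) : HasWalk S (x 0) y (k+1) := by
  refine ⟨fun j => if j = k+1 then y else x j, f, by simp, by simp, ?_⟩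
  intro j hj
  rcases (by omega : j < k ∨ j = k) with hjk | rfl
  · simp only [if_neg (by omega : j ≠ k+1), if_neg (by omega : j+1 ≠ k+1)]
    exact hw j (by omega)
  · simp only [if_neg (by omega : j ≠ j+1), if_pos rfl]
    obtain ⟨hf, hm1, _⟩ := hw j (by omega)
    exact ⟨hf, hm1, hy⟩

/-- The key construction: from a chord `e` and connectivity outside `e`, produce a cycle
whose length is (minimal walk length) + 1 and whose edge set is exactly the path edges
plus `e`. -/
lemma exists_cycle_of_connRel {e : Finset V} (huv : u ≠ v) (hu : u ∈ e) (hv : v ∈ e)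
    (he : e ∉ S) (h : connRel S u v) :
    ∃ (l : ℕ) (x : ℕ → V) (f : ℕ → Finset V),
      1 ≤ l ∧ x 0 = u ∧ x l = v ∧ IsWalk S x f l ∧
      (∀ l', HasWalk S u v l' → l ≤ l') ∧
      IsCycle (insert e ((Finset.range l).image f)) (l + 1) ∧
      (insert e ((Finset.range l).image f)).card = l + 1 := by
  have hex : ∃ l, HasWalk S u v l := connRel_iff_hasWalk.mp h
  set l := Nat.find hex with hldef
  have hmin : ∀ l', HasWalk S u v l' → l ≤ l' := fun l' h' => Nat.find_min' hex h'
  obtain ⟨x, f, hx0, hxl, hw⟩ := Nat.find_spec hex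
  rw [← hldef] at hxl hw
  have hl1 : 1 ≤ l := by
    rcases Nat.eq_zero_or_pos l with h0 | h1
    · exfalso; apply huv; rw [← hx0, ← hxl, h0]
    · exact h1
  -- vertex distinctness
  have hxdist : ∀ a b, a < b → b ≤ l → x a ≠ x b := by
    intro a b hab hbl heq
    set d := b - a with hd
    have hwalk' : HasWalk S u v (l - d) := by
      refine ⟨fun k => if k ≤ a then x k else x (k + d),
        fun k => if k < a then f k else f (k + d), by simp [hx0], ?_, ?_⟩
      · by_cases hc : l - d ≤ a
        · have h1 : l - d = a := by omega
          have h2 : b = l := by omega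
          show (if l - d ≤ a then x (l - d) else x (l - d + d)) = v
          rw [if_pos hc, h1, heq, h2]
          exact hxl
        · simp only [if_neg hc]
          show x (l - d + d) = v
          have h2 : l - d + d = l := by omega
          rw [h2]; exact hxl
      · intro k hk
        by_cases hka : k < a
        · simp only [if_pos hka, if_pos (by omega : k ≤ a), if_pos (by omega : k + 1 ≤ a)]
          exact hw k (by omega)
        · simp only [if_neg hka, if_neg (by omega : ¬ k + 1 ≤ a)]
          obtain ⟨hf, hm1, hm2⟩ := hw (k + d) (by omega)
          refine ⟨hf, ?_, ?_⟩
          · by_cases hka' : k ≤ a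
            · have : k = a := by omega
              subst this
              simp only [if_pos le_rfl, heq]
              have : k + d = b := by omega
              rw [this]  -- goal: x b ∈ f (k+d); hm1 : x (k+d) ∈ f (k+d)
              have h2 : k + d = b := by omega
              rw [← h2]; exact hm1
            · simp only [if_neg hka']; exact hm1
          · have : k + 1 + d = k + d + 1 := by omega
            rw [this]; exact hm2
    have := hmin _ hwalk'
    omega
  -- edge distinctness
  have hfdist : ∀ a b, a < b → b < l → f a ≠ f b := by
    intro a b hab hbl heq
    set d := b - a with hd
    have hwalk' : HasWalk S u v (l - d) := by
      refine ⟨fun k => if k ≤ a then x k else x (k + d),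
        fun k => if k ≤ a then f k else f (k + d), by simp [hx0], ?_, ?_⟩
      · have : ¬ l - d ≤ a := by omega
        simp only [if_neg this]
        have h2 : l - d + d = l := by omega
        rw [h2]; exact hxl
      · intro k hk
        by_cases hka : k < a
        · simp only [if_pos (by omega : k ≤ a), if_pos (by omega : k + 1 ≤ a)]
          exact hw k (by omega)
        · by_cases hka' : k ≤ a
          · have hkeq : k = a := by omega
            simp only [if_pos hka', if_neg (by omega : ¬ k + 1 ≤ a)]
            obtain ⟨hf, hm1, _⟩ := hw k (by omega)
            obtain ⟨_, _, hm2⟩ := hw b (by omega)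
            refine ⟨hf, hm1, ?_⟩
            show x (k + 1 + d) ∈ f k
            have h3 : k + 1 + d = b + 1 := by omega
            have h4 : f k = f b := by rw [hkeq, heq]
            rw [h3, h4]; exact hm2
          · simp only [if_neg hka', if_neg (by omega : ¬ k + 1 ≤ a)]
            obtain ⟨hf, hm1, hm2⟩ := hw (k + d) (by omega)
            refine ⟨hf, hm1, ?_⟩
            have : k + 1 + d = k + d + 1 := by omega
            rw [this]; exact hm2
    have := hmin _ hwalk'
    omega
  -- the cycle
  haveI : NeZero (l + 1) := ⟨Nat.succ_ne_zero l⟩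
  haveI : Fact (1 < l + 1) := ⟨by omega⟩
  have hvalsucc : ∀ i : ZMod (l+1), (i + 1).val = (i.val + 1) % (l + 1) := by
    intro i; rw [ZMod.val_add, ZMod.val_one]
  have hval_lt : ∀ i : ZMod (l+1), i.val ≤ l := fun i => by
    have := ZMod.val_lt i; omega
  have hvalzero : ∀ i : ZMod (l+1), i.val = 0 ↔ i = 0 := fun i => ZMod.val_eq_zero i
  have hfmemS : ∀ k < l, f k ∈ S := fun k hk => (hw k hk).1
  have henotin : e ∉ (Finset.range l).image f := by
    intro hmem
    obtain ⟨k, hk, hke⟩ := Finset.mem_image.mp hmem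
    exact he (hke ▸ hfmemS k (Finset.mem_range.mp hk))
  refine ⟨l, x, f, hl1, hx0, hxl, hw, hmin, ⟨by omega, ?_⟩, ?_⟩
  · refine ⟨fun i => x i.val, fun i => if i = 0 then e else f (i.val - 1), ?_, ?_, ?_⟩
    · intro i j hij
      by_contra hne
      rcases Nat.lt_or_ge i.val j.val with h' | h'
      · exact hxdist _ _ h' (hval_lt j) hij
      · rcases Nat.lt_or_ge j.val i.val with h'' | h''
        · exact hxdist _ _ h'' (hval_lt i) hij.symm
        · exact hne (ZMod.val_injective _ (by omega))
    · intro i j hij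
      by_cases hi : i = 0 <;> by_cases hj : j = 0
      · rw [hi, hj]
      · simp only [if_pos hi, if_neg hj] at hij
        exact absurd (hij ▸ hfmemS (j.val - 1) (by
          have := hval_lt j
          have : j.val ≠ 0 := fun h => hj ((hvalzero j).mp h)
          omega)) he
      · simp only [if_neg hi, if_pos hj] at hij
        exact absurd (hij.symm ▸ hfmemS (i.val - 1) (by
          have := hval_lt i
          have : i.val ≠ 0 := fun h => hi ((hvalzero i).mp h)
          omega)) he
      · simp only [if_neg hi, if_neg hj] at hij
        have hiv : i.val ≠ 0 := fun h => hi ((hvalzero i).mp h)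
        have hjv : j.val ≠ 0 := fun h => hj ((hvalzero j).mp h)
        have hivl := hval_lt i
        have hjvl := hval_lt j
        have : i.val - 1 = j.val - 1 := by
          by_contra hne
          rcases Nat.lt_or_ge (i.val - 1) (j.val - 1) with h' | h'
          · exact hfdist _ _ h' (by omega) hij
          · exact hfdist _ _ (by omega) (by omega) hij.symm
        exact ZMod.val_injective _ (by omega)
    · intro i
      by_cases hi : i = 0
      · subst hi
        refine ⟨by simp [mem_insert_self], ?_, ?_⟩
        · simp only [if_pos rfl, ZMod.val_zero, hx0]; exact hu
        · by_cases h01 : (0 : ZMod (l+1)) + 1 = 0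
          · simp only [if_pos h01, ZMod.val_zero, hx0]; exact hu
          · have : ((0 : ZMod (l+1)) + 1).val = 1 := by
              rw [hvalsucc]; simp [Nat.mod_eq_of_lt (by omega : 1 < l + 1)]
            simp only [if_neg h01, this, ZMod.val_zero]
            obtain ⟨_, hm1, _⟩ := hw 0 (by omega)
            simpa using hm1
      · have hiv : i.val ≠ 0 := fun h => hi ((hvalzero i).mp h)
        have hivl := hval_lt i
        refine ⟨?_, ?_, ?_⟩
        · simp only [if_neg hi]
          exact Finset.mem_insert.mpr (Or.inr (Finset.mem_image.mpr
            ⟨i.val - 1, Finset.mem_range.mpr (by omega), rfl⟩))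
        · simp only [if_neg hi]
          obtain ⟨_, _, hm2⟩ := hw (i.val - 1) (by omega)
          have : i.val - 1 + 1 = i.val := by omega
          rw [this] at hm2; exact hm2
        · by_cases hi1 : i + 1 = 0
          · have hival : i.val = l := by
              have := hvalsucc i
              rw [hi1] at this
              simp only [ZMod.val_zero] at this
              rcases Nat.lt_or_ge (i.val + 1) (l + 1) with h' | h'
              · rw [Nat.mod_eq_of_lt h'] at this; omega
              · omega
            simp only [if_pos hi1, hival, hxl]; exact hv
          · have hival : i.val < l := by
              rcases Nat.lt_or_ge (i.val + 1) (l + 1) with h' | h'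
              · omega
              · have h2 : i.val = l := by omega
                have := hvalsucc i
                rw [h2] at this
                simp only [Nat.mod_self] at this
                exact absurd ((hvalzero _).mp this) hi1
            have hval1 : (i + 1).val = i.val + 1 := by
              rw [hvalsucc, Nat.mod_eq_of_lt (by omega)]
            simp only [if_neg hi1, hval1]
            have : i.val + 1 - 1 = i.val := by omega
            rw [this]
            exact (hw i.val hival).2.1
  · rw [Finset.card_insert_of_notMem henotin, Finset.card_image_of_injOn, Finset.card_range]
    intro a ha b hb hab
    by_contra hne
    simp only [Finset.coe_range, Set.mem_Iio] at ha hb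
    rcases Nat.lt_or_ge a b with h' | h'
    · exact hfdist _ _ h' hb hab
    · exact hfdist _ _ (by omega) ha hab.symm

lemma IsCycle.mono {D D' : Finset (Finset V)} (h : D ⊆ D') {p : ℕ} :
    IsCycle D p → IsCycle D' p := by
  rintro ⟨hp, vs, es, h1, h2, h3⟩
  exact ⟨hp, vs, es, h1, h2, fun i => ⟨h (h3 i).1, (h3 i).2⟩⟩

/-- a walk along a cycle, from a vertex of `es i` to a vertex of `es j`. -/
lemma hasWalk_of_cycle {z : ℕ} [NeZero z] {S : Finset (Finset V)} {vs : ZMod z → V}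
    {es : ZMod z → Finset V} (hc : ∀ i, es i ∈ S ∧ vs i ∈ es i ∧ vs i ∈ es (i+1))
    {u v : V} {i j : ZMod z} (hu : u ∈ es i) (hv : v ∈ es j) :
    HasWalk S u v ((j - i).val + 1) := by
  set g := (j - i).val with hg
  have hij : i + (g : ZMod z) = j := by
    rw [hg, ZMod.natCast_rightInverse (j - i)]; ring
  refine ⟨fun k => if k = 0 then u else if k = g + 1 then v else vs (i + ((k:ℕ) - 1 : ℕ)),
    fun k => es (i + (k : ℕ)), by simp, by simp, ?_⟩
  intro k hk
  refine ⟨(hc _).1, ?_, ?_⟩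
  · by_cases hk0 : k = 0
    · subst hk0; simpa using hu
    · simp only [if_neg hk0, if_neg (by omega : ¬ k = g + 1)]
      have h1 : ((k - 1 : ℕ) : ZMod z) + 1 = (k : ZMod z) := by
        have : (1:ℕ) ≤ k := by omega
        push_cast [this]
        ring
      have := (hc (i + ((k:ℕ) - 1 : ℕ))).2.2
      rwa [add_assoc, h1] at this
  · by_cases hk1 : k + 1 = g + 1
    · have hkg : k = g := by omega
      simp only [if_neg (by omega : ¬ k + 1 = 0), if_pos hk1]
      rw [hkg, hij]
      exact hv
    · simp only [if_neg (by omega : ¬ k + 1 = 0), if_neg hk1]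
      have h1 : ((k + 1 - 1 : ℕ) : ZMod z) = (k : ZMod z) := by norm_num
      rw [h1]
      exact (hc (i + (k:ℕ))).2.1

lemma cycle_image_subset {z : ℕ} [NeZero z] {D : Finset (Finset V)} {vs : ZMod z → V}
    {es : ZMod z → Finset V} (hc : ∀ i, es i ∈ D ∧ vs i ∈ es i ∧ vs i ∈ es (i+1)) :
    Finset.univ.image es ⊆ D := by
  intro g hg
  obtain ⟨i, _, rfl⟩ := Finset.mem_image.mp hg
  exact (hc i).1

lemma cycle_image_card {z : ℕ} [NeZero z] {es : ZMod z → Finset V}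
    (hes : Function.Injective es) : (Finset.univ.image es).card = z := by
  rw [Finset.card_image_of_injective _ hes, Finset.card_univ, ZMod.card]

/-- the edge set of a cycle of length `p` has excess at least 1. -/
lemma one_le_exZ_of_cycle [Fintype V] {r p : ℕ} (hr : 2 ≤ r) {E : Finset (Finset V)}
    (hunif : ∀ e ∈ E, e.card = r) {C : Finset (Finset V)} (hC : C ⊆ E) (hp : 2 ≤ p)
    {vs : ZMod p → V} {es : ZMod p → Finset V} (hvs : Function.Injective vs)
    (hes : Function.Injective es) (hcyc : ∀ i, es i ∈ C ∧ vs i ∈ es i ∧ vs i ∈ es (i+1))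
    (hCcard : C.card ≤ p) : 1 ≤ exZ r C := by
  haveI : NeZero p := ⟨by omega⟩
  haveI : Fact (1 < p) := ⟨by omega⟩
  have himg : Finset.univ.image es = C :=
    Finset.eq_of_subset_of_card_le (cycle_image_subset hcyc) (by rw [cycle_image_card hes]; exact hCcard)
  have hCp : C.card = p := by rw [← himg, cycle_image_card hes]
  have hone : (1 : ZMod p) ≠ 0 := by
    intro h
    have := ZMod.val_one p
    rw [h, ZMod.val_zero] at this
    omega
  have hvne : ∀ i : ZMod p, vs i ≠ vs (i + 1) := by
    intro i h
    have h2 : i = i + 1 := hvs h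
    have h3 : (1 : ZMod p) = 0 := by
      have h4 := congrArg (fun t => t - i) h2
      simpa using h4.symm
    exact hone h3
  -- covered set bound
  set cov := C.biUnion id with hcov
  have hsub : cov ⊆ Finset.univ.biUnion (fun i : ZMod p => es i \ {vs i}) := by
    intro y hy
    obtain ⟨g, hgC, hyg⟩ := Finset.mem_biUnion.mp hy
    rw [← himg] at hgC
    obtain ⟨i, _, rfl⟩ := Finset.mem_image.mp hgC
    simp only [id] at hyg
    by_cases hyv : y = vs i
    · subst hyv
      refine Finset.mem_biUnion.mpr ⟨i + 1, mem_univ _, ?_⟩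
      rw [Finset.mem_sdiff]
      refine ⟨(hcyc i).2.2, ?_⟩
      simp only [Finset.mem_singleton]
      exact hvne i
    · exact Finset.mem_biUnion.mpr ⟨i, mem_univ _,
        Finset.mem_sdiff.mpr ⟨hyg, by simpa using hyv⟩⟩
  have hcovcard : cov.card ≤ p * (r - 1) := by
    calc cov.card ≤ (Finset.univ.biUnion (fun i : ZMod p => es i \ {vs i})).card :=
          Finset.card_le_card hsub
      _ ≤ ∑ i : ZMod p, (es i \ {vs i}).card := Finset.card_biUnion_le
      _ = ∑ i : ZMod p, (r - 1) := by
          apply Finset.sum_congr rfl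
          intro i _
          rw [← Finset.erase_eq, Finset.card_erase_of_mem (hcyc i).2.1,
            hunif _ (hC (hcyc i).1)]
      _ = p * (r - 1) := by rw [Finset.sum_const, Finset.card_univ, ZMod.card, smul_eq_mul]
  have hw0 : vs 0 ∈ cov := Finset.mem_biUnion.mpr ⟨es 0, (hcyc 0).1, (hcyc 0).2.1⟩
  have hge := nCompsFull_ge C hw0
  rw [← hcov] at hge
  have h1 : (Fintype.card V : ℤ) + 1 ≤ nCompsFull C + cov.card := by exact_mod_cast hge
  have h2 : (cov.card : ℤ) ≤ (p:ℤ) * ((r:ℤ) - 1) := by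
    have h2' : (cov.card : ℤ) ≤ ((p * (r-1) : ℕ) : ℤ) := by exact_mod_cast hcovcard
    have h2'' : ((p * (r-1) : ℕ) : ℤ) = (p:ℤ) * ((r:ℤ)-1) := by
      push_cast [(by omega : 1 ≤ r)]; ring
    linarith [h2', h2'']
  have h3 : ((r - 1 : ℕ) : ℤ) = (r : ℤ) - 1 := by
    have : 1 ≤ r := by omega
    push_cast [this]; ring
  rw [exZ, hCp, h3]
  linarith [h1, h2]

/-- positive excess yields a cycle. -/
lemma exists_cycle_of_exZ [Fintype V] {r : ℕ} (hr : 2 ≤ r) {E : Finset (Finset V)}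
    (hunif : ∀ e ∈ E, e.card = r) :
    ∀ {S : Finset (Finset V)}, S ⊆ E → 1 ≤ exZ r S → ∃ p, IsCycle S p := by
  have key : ∀ N : ℕ, ∀ S : Finset (Finset V), S.card ≤ N → S ⊆ E → 1 ≤ exZ r S →
      ∃ p, IsCycle S p := by
    intro N
    induction N with
    | zero =>
      intro S hc hS hex
      have hS0 : S = ∅ := Finset.card_eq_zero.mp (by omega)
      rw [hS0, exZ_empty] at hex
      omega
    | succ N ih =>
      intro S hc hS hex
      have hSne : S.Nonempty := by
        rcases Finset.eq_empty_or_nonempty S with rfl | h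
        · rw [exZ_empty] at hex; omega
        · exact h
      obtain ⟨e, he⟩ := hSne
      set S' := S.erase e with hS'
      by_cases hex' : 1 ≤ exZ r S'
      · obtain ⟨p, hp⟩ := ih S' (by
          rw [hS']
          have := Finset.card_erase_of_mem he
          omega) ((Finset.erase_subset _ _).trans hS) hex'
        exact ⟨p, hp.mono (Finset.erase_subset _ _)⟩

      · have hz : exZ r S' = 0 := le_antisymm (by omega)
          (exZ_nonneg hr hunif ((Finset.erase_subset _ _).trans hS))
        have hins : insert e S' = S := Finset.insert_erase he
        have hexins := exZ_insert hr (Finset.notMem_erase e S) (hunif e (hS he))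
        rw [hins, hz] at hexins
        have hAcard : (e.image (Quot.mk (connRel S'))).card < e.card := by
          rw [hunif e (hS he)]
          have h3 : ((r - 1 : ℕ) : ℤ) = (r : ℤ) - 1 := by
            push_cast [(by omega : 1 ≤ r)]; ring
          rw [hexins, h3] at hex
          have h5 : ((e.image (Quot.mk (connRel S'))).card : ℤ) < (r:ℤ) := by linarith
          exact_mod_cast h5
        obtain ⟨a, ha, b, hb, hab, hquot⟩ :=
          Finset.exists_ne_map_eq_of_card_lt_of_maps_to hAcard
            (fun a ha => Finset.mem_image_of_mem _ ha)
        have hconn : connRel S' a b := quotMk_eq_iff.mp hquot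
        obtain ⟨l, x, f, hl1, _, _, hwalk, _, hcyc, _⟩ :=
          exists_cycle_of_connRel hab ha hb (Finset.notMem_erase e S) hconn
        refine ⟨l + 1, hcyc.mono ?_⟩
        intro g hg
        rcases Finset.mem_insert.mp hg with rfl | hg'
        · exact he
        · obtain ⟨k, hk, rfl⟩ := Finset.mem_image.mp hg'
          exact Finset.erase_subset _ _ (hwalk k (Finset.mem_range.mp hk)).1
  intro S hS hex
  exact key S.card S le_rfl hS hex


/-- If all vertices of an edge `e ∈ E \ S'` lie in the (connected) cycle `S'` of
minimum length `z`, we get a contradiction with the girth. -/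
lemma chord_contradiction {r z : ℕ} [NeZero z] (hr : 2 ≤ r) (hz4 : 4 ≤ z)
    {E : Finset (Finset V)} (hunif : ∀ g ∈ E, g.card = r) (hlin : Linear E)
    (hmin : ∀ p, 2 ≤ p → p < z → ¬ IsCycle E p)
    (vs : ZMod z → V) (es : ZMod z → Finset V)
    (hvs : Function.Injective vs) (hes : Function.Injective es)
    (hcycE : ∀ i, es i ∈ E ∧ vs i ∈ es i ∧ vs i ∈ es (i+1))
    {e : Finset V} (heE : e ∈ E) (hee : ∀ i, e ≠ es i) (hecard : e.card = r)
    (hconn : ∀ u ∈ e, ∀ v ∈ e, connRel (Finset.univ.image es) u v) : False := by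
  set S' := Finset.univ.image es with hS'
  have hcycS : ∀ i, es i ∈ S' ∧ vs i ∈ es i ∧ vs i ∈ es (i+1) := fun i =>
    ⟨Finset.mem_image_of_mem es (mem_univ i), (hcycE i).2⟩
  have hS'E : S' ⊆ E := by
    intro g hg
    obtain ⟨i, _, rfl⟩ := Finset.mem_image.mp hg
    exact (hcycE i).1
  have henotin : e ∉ S' := by
    intro h
    obtain ⟨i, _, h'⟩ := Finset.mem_image.mp h
    exact hee i h'.symm
  -- kill a pair at small cyclic gap
  have killgap : ∀ u ∈ e, ∀ v ∈ e, u ≠ v → ∀ i j : ZMod z, u ∈ es i → v ∈ es j →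
      (j - i).val + 2 ≤ z - 1 → False := by
    intro u hu v hv huv i j hui hvj hgap
    have hw := hasWalk_of_cycle hcycS hui hvj
    obtain ⟨l, x, f, hl1, _, _, hwalk, hlmin, hcyc, _⟩ :=
      exists_cycle_of_connRel huv hu hv henotin (connRel_of_hasWalk hw)
    have hll : l ≤ (j - i).val + 1 := hlmin _ hw
    have hsub : insert e ((Finset.range l).image f) ⊆ E := by
      intro g hg
      rcases Finset.mem_insert.mp hg with rfl | hg'
      · exact heE
      · obtain ⟨k, hk, rfl⟩ := Finset.mem_image.mp hg'
        exact hS'E (hwalk k (Finset.mem_range.mp hk)).1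
    exact hmin (l + 1) (by omega) (by omega) (hcyc.mono hsub)
  -- every vertex of e lies on some cycle edge
  have posn : ∀ w ∈ e, ∃ i, w ∈ es i := by
    intro w hw
    obtain ⟨w', hw', hww'⟩ := Finset.exists_mem_ne (by omega : 1 < e.card) w
    have hcr := hconn w hw w' hw'
    rcases hcr.cases_head with h | ⟨c, ⟨g, hgS', hwg, _⟩, _⟩
    · exact absurd h.symm hww'
    · obtain ⟨i, _, rfl⟩ := Finset.mem_image.mp hgS'
      exact ⟨i, hwg⟩
  -- linearity: two distinct vertices of e cannot be on the same cycle edge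
  have linpos : ∀ u ∈ e, ∀ v ∈ e, u ≠ v → ∀ i, u ∈ es i → v ∈ es i → False := by
    intro u hu v hv huv i hui hvi
    have hcard := hlin e heE (es i) (hcycE i).1 (hee i)
    have hsub : ({u, v} : Finset V) ⊆ e ∩ es i := by
      intro w hw
      rcases Finset.mem_insert.mp hw with rfl | hw'
      · exact Finset.mem_inter.mpr ⟨hu, hui⟩
      · rw [Finset.mem_singleton.mp hw']
        exact Finset.mem_inter.mpr ⟨hv, hvi⟩
    have h2 : ({u, v} : Finset V).card = 2 := Finset.card_pair huv
    have := Finset.card_le_card hsub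
    omega
  -- get two distinct vertices of e
  obtain ⟨u, hu, v, hv, huv⟩ := Finset.one_lt_card.mp (by omega : 1 < e.card)
  obtain ⟨i, hui⟩ := posn u hu
  obtain ⟨j, hvj⟩ := posn v hv
  have hij : i ≠ j := fun h => linpos u hu v hv huv i hui (h ▸ hvj)
  have hvalz : ∀ a : ZMod z, a ≠ 0 → 1 ≤ a.val ∧ a.val ≤ z - 1 := by
    intro a ha
    have h1 := ZMod.val_lt a
    have h2 : a.val ≠ 0 := fun h => ha ((ZMod.val_eq_zero a).mp h)
    omega
  have hd0 : j - i ≠ 0 := fun h => hij (by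
    have := sub_eq_zero.mp h
    exact this.symm)
  have hd'0 : i - j ≠ 0 := fun h => hij (sub_eq_zero.mp h)
  set d := (j - i).val with hd
  set d' := (i - j).val with hd'
  have hdb := hvalz _ hd0
  have hdb' := hvalz _ hd'0
  have hdd' : d + d' = z := by
    have h0 : (j - i) + (i - j) = 0 := by ring
    have h1 : ((j - i) + (i - j)).val = 0 := by rw [h0, ZMod.val_zero]
    rw [ZMod.val_add] at h1
    have h2 : (d + d') % z = 0 := h1
    have h3 := Nat.dvd_of_mod_eq_zero h2
    obtain ⟨c, hc⟩ := h3
    rcases Nat.lt_or_ge c 2 with h4 | h4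
    · interval_cases c <;> omega
    · have : z * 2 ≤ z * c := Nat.mul_le_mul_left z h4
      omega
  by_cases hz5 : 5 ≤ z
  · by_cases hcase : d + 2 ≤ z - 1
    · exact killgap u hu v hv huv i j hui hvj hcase
    · exact killgap v hv u hu huv.symm j i hvj hui (by omega)
  · -- z = 4
    have hz : z = 4 := by omega
    subst hz
    have hd2 : d = 2 := by
      rcases (by omega : d = 1 ∨ d = 2 ∨ d = 3) with h | h | h
      · exact absurd (killgap u hu v hv huv i j hui hvj (by omega)) not_false
      · exact h
      · exact absurd (killgap v hv u hu huv.symm j i hvj hui (by omega)) not_false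
    by_cases hr3 : 3 ≤ r
    · -- a third vertex of e
      have hne : (e \ {u, v}).Nonempty := by
        rw [← Finset.card_pos]
        have h1 : ({u, v} : Finset V).card = 2 := Finset.card_pair huv
        have := Finset.le_card_sdiff ({u, v} : Finset V) e
        omega
      obtain ⟨w, hw⟩ := hne
      have hwe : w ∈ e := (Finset.mem_sdiff.mp hw).1
      have hwu : w ≠ u := fun h =>
        (Finset.mem_sdiff.mp hw).2 (by rw [h]; exact Finset.mem_insert_self _ _)
      have hwv : w ≠ v := fun h =>
        (Finset.mem_sdiff.mp hw).2 (by rw [h]; simp)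
      obtain ⟨k, hwk⟩ := posn w hwe
      have hki : k ≠ i := fun h => linpos w hwe u hu hwu i (h ▸ hwk) hui
      have hkj : k ≠ j := fun h => linpos w hwe v hv hwv j (h ▸ hwk) hvj
      have hki0 : k - i ≠ 0 := fun h => hki (sub_eq_zero.mp h)
      have hkij : k - i ≠ j - i := fun h => hkj (sub_left_inj.mp h)
      have hval2 : (j - i).val = 2 := by omega
      have hji2 : j - i = 2 := by
        apply ZMod.val_injective
        rw [hval2]; decide
      have hval13 : (k - i).val = 1 ∨ (k - i).val = 3 := by
        rw [hji2] at hkij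
        revert hki0 hkij
        generalize (k - i) = a
        revert a
        decide
      rcases hval13 with h13 | h13
      · exact killgap u hu w hwe hwu.symm i k hui hwk (by omega)
      · have : (i - k).val = 1 := by
          have hik : i - k = -(k - i) := by ring
          have h3 : k - i = 3 := by
            apply ZMod.val_injective
            rw [h13]; decide
          rw [hik, h3]
          decide
        exact killgap w hwe u hu hwu k i hwk hui (by omega)
    · -- r = 2
      have hr2 : r = 2 := by omega
      have hone : ∀ m : ZMod 4, m - 1 ≠ m := by decide
      have estwo : ∀ m : ZMod 4, es m = {vs (m - 1), vs m} := by
        intro m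
        have h1 : vs (m - 1) ∈ es m := by
          have := (hcycE (m - 1)).2.2
          rwa [sub_add_cancel] at this
        have h2 : vs m ∈ es m := (hcycE m).2.1
        have hsub : ({vs (m-1), vs m} : Finset V) ⊆ es m := by
          intro y hy
          rcases Finset.mem_insert.mp hy with rfl | hy'
          · exact h1
          · rw [Finset.mem_singleton.mp hy']; exact h2
        have hc2 : ({vs (m-1), vs m} : Finset V).card = 2 :=
          Finset.card_pair (fun h => hone m (hvs h))
        have hc2' : (es m).card = 2 := by rw [hunif _ (hcycE m).1, hr2]
        exact (Finset.eq_of_subset_of_card_le hsub (by omega)).symm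
      have hua : u = vs (i - 1) ∨ u = vs i := by
        have := hui
        rw [estwo i] at this
        rcases Finset.mem_insert.mp this with h | h
        · exact Or.inl h
        · exact Or.inr (Finset.mem_singleton.mp h)
      have hvb : v = vs (j - 1) ∨ v = vs j := by
        have := hvj
        rw [estwo j] at this
        rcases Finset.mem_insert.mp this with h | h
        · exact Or.inl h
        · exact Or.inr (Finset.mem_singleton.mp h)
      obtain ⟨a, hua⟩ : ∃ a, u = vs a := by
        rcases hua with h | h
        exacts [⟨_, h⟩, ⟨_, h⟩]
      obtain ⟨b, hvb⟩ : ∃ b, v = vs b := by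
        rcases hvb with h | h
        exacts [⟨_, h⟩, ⟨_, h⟩]
      have hab : a ≠ b := fun h => huv (by rw [hua, hvb, h])
      have huesa : u ∈ es (a + 1) := by rw [hua]; exact (hcycE a).2.2
      have huesa' : u ∈ es a := by rw [hua]; exact (hcycE a).2.1
      have hvesb : v ∈ es (b + 1) := by rw [hvb]; exact (hcycE b).2.2
      have hvesb' : v ∈ es b := by rw [hvb]; exact (hcycE b).2.1
      have hba : b - a ≠ 0 := fun h => hab (sub_eq_zero.mp h).symm
      rcases (by revert hba; generalize b - a = c; revert c; decide :
        b - a = 1 ∨ b - a = 2 ∨ b - a = 3) with hc | hc | hc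
      · -- b = a + 1 : u, v both in es (a+1) = es b
        have hb : b = a + 1 := by
          have h9 := congrArg (fun t => t + a) hc
          simp only [sub_add_cancel] at h9
          rw [h9, add_comm]
        exact linpos u hu v hv huv (a+1) huesa (hb ▸ hvesb')
      · -- gap 1 between positions a+1 and b
        have : (b - (a+1)).val = 1 := by
          have h1 : b - (a + 1) = 1 := by
            rw [show b - (a + 1) = (b - a) - 1 by ring, hc]; decide
          rw [h1]; decide
        exact killgap u hu v hv huv (a+1) b huesa hvesb' (by omega)
      · -- a = b + 1 : u, v both in es (b+1) = es a
        have ha : a = b + 1 := by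
          have h1 : a - b = 1 := by
            have h2 : a - b = -(b - a) := by ring
            rw [h2, hc]; decide
          have h9 := congrArg (fun t => t + b) h1
          simp only [sub_add_cancel] at h9
          rw [h9, add_comm]
        exact linpos u hu v hv huv (b+1) (ha ▸ huesa') hvesb

lemma IsCycle.card_le {S : Finset (Finset V)} {p : ℕ} (h : IsCycle S p) : p ≤ S.card := by
  obtain ⟨hp2, vs, es, hvs, hes, hc⟩ := h
  haveI : NeZero p := ⟨by omega⟩
  calc p = (Finset.univ.image es).card := (cycle_image_card hes).symm
    _ ≤ S.card := Finset.card_le_card (cycle_image_subset hc)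

lemma rm1_cast {r : ℕ} (hr : 2 ≤ r) : ((r - 1 : ℕ) : ℤ) = (r : ℤ) - 1 := by
  push_cast [(by omega : 1 ≤ r)]; ring

lemma main_bound {r z : ℕ} (hr : 2 ≤ r) (hz4 : 4 ≤ z)
    {E : Finset (Finset V)} (hunif : ∀ g ∈ E, g.card = r) (hlin : Linear E)
    (hmin : ∀ p, 2 ≤ p → p < z → ¬ IsCycle E p) :
    ∀ S : Finset (Finset V), S ⊆ E → 1 ≤ exZ r S →
      z ≤ S.card ∧ exZ r S ≤ 1 + ((r:ℤ) - 1) * ((S.card : ℤ) - z) ∧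
        (z < S.card → exZ r S ≤ ((r:ℤ) - 1) * ((S.card : ℤ) - z)) := by
  haveI : NeZero z := ⟨by omega⟩
  have zle : ∀ S : Finset (Finset V), S ⊆ E → 1 ≤ exZ r S → z ≤ S.card := by
    intro S hS hex
    obtain ⟨p, hp⟩ := exists_cycle_of_exZ hr hunif hS hex
    have h1 : ¬ p < z := fun h => hmin p hp.1 h (hp.mono hS)
    have h2 := hp.card_le
    omega
  have key : ∀ N : ℕ, ∀ S : Finset (Finset V), S.card ≤ N → S ⊆ E → 1 ≤ exZ r S →
      z ≤ S.card ∧ exZ r S ≤ 1 + ((r:ℤ) - 1) * ((S.card : ℤ) - z) ∧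
        (z < S.card → exZ r S ≤ ((r:ℤ) - 1) * ((S.card : ℤ) - z)) := by
    intro N
    induction N with
    | zero =>
      intro S hc hS hex
      exact absurd (zle S hS hex) (by omega)
    | succ N ih =>
      intro S hc hS hex
      have hzS := zle S hS hex
      have hSne : S.Nonempty := Finset.card_pos.mp (by omega)
      by_cases hA : ∃ g ∈ S, 1 ≤ exZ r (S.erase g)
      · -- Case A
        obtain ⟨e, heS, hex'⟩ := hA
        have hS'sub : S.erase e ⊆ E := (Finset.erase_subset _ _).trans hS
        have hcard' : (S.erase e).card = S.card - 1 := Finset.card_erase_of_mem heS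
        obtain ⟨hz1, hz2, hz3⟩ := ih (S.erase e) (by omega) hS'sub hex'
        have hexins := exZ_insert hr (Finset.notMem_erase e S) (hunif e (hS heS))
        rw [Finset.insert_erase heS] at hexins
        have hD1 : 1 ≤ (e.image (Quot.mk (connRel (S.erase e)))).card := by
          apply Finset.card_pos.mpr
          apply Finset.Nonempty.image
          apply Finset.card_pos.mp
          rw [hunif e (hS heS)]; omega
        have hr1 := rm1_cast hr
        have hcards : (S.card : ℤ) = ((S.erase e).card : ℤ) + 1 := by
          have : 1 ≤ S.card := by omega
          push_cast [hcard']
          omega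
        by_cases hcase : z < (S.erase e).card
        · have hstrict := hz3 hcase
          have hDint : (1:ℤ) ≤ (e.image (Quot.mk (connRel (S.erase e)))).card := by
            exact_mod_cast hD1
          refine ⟨by omega, by rw [hexins, hr1]; nlinarith, fun _ => by
            rw [hexins, hr1]; nlinarith⟩
        · have hSz : (S.erase e).card = z := by omega
          have hexS' : exZ r (S.erase e) = 1 := by
            have := hz2
            rw [hSz] at this
            simp at this
            omega
          have hD2 : 2 ≤ (e.image (Quot.mk (connRel (S.erase e)))).card := by
            by_contra hcon
            have hD1' : (e.image (Quot.mk (connRel (S.erase e)))).card ≤ 1 := by omega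
            have hallconn : ∀ u ∈ e, ∀ v ∈ e, connRel (S.erase e) u v := by
              intro u hu v hv
              exact quotMk_eq_iff.mp (Finset.card_le_one.mp hD1' _
                (Finset.mem_image_of_mem _ hu) _ (Finset.mem_image_of_mem _ hv))
            obtain ⟨p, hp⟩ := exists_cycle_of_exZ hr hunif hS'sub hex'
            have hpz : p = z := by
              have h1 : ¬ p < z := fun h => hmin p hp.1 h (hp.mono hS'sub)
              have h2 := hp.card_le
              omega
            subst hpz
            obtain ⟨hp2, vs, es, hvs, hes, hcyc⟩ := hp
            have himg : Finset.univ.image es = S.erase e := by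
              apply Finset.eq_of_subset_of_card_le (cycle_image_subset hcyc)
              rw [cycle_image_card hes, hSz]
            refine chord_contradiction hr hz4 hunif hlin hmin vs es hvs hes
              (fun i => ⟨hS'sub (hcyc i).1, (hcyc i).2⟩) (hS heS)
              (fun i h => (Finset.notMem_erase e S) (h ▸ (hcyc i).1))
              (hunif e (hS heS)) ?_
            intro u hu v hv
            rw [himg]
            exact hallconn u hu v hv
          have hDint : (2:ℤ) ≤ (e.image (Quot.mk (connRel (S.erase e)))).card := by
            exact_mod_cast hD2
          refine ⟨by omega, ?_, fun _ => ?_⟩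
          · rw [hexins, hr1, hexS']
            have : (S.card : ℤ) - z = 1 := by rw [hcards, hSz]; ring
            rw [this]; linarith
          · rw [hexins, hr1, hexS']
            have : (S.card : ℤ) - z = 1 := by rw [hcards, hSz]; ring
            rw [this]; linarith
      · -- Case B
        push_neg at hA
        have hB : ∀ g ∈ S, exZ r (S.erase g) = 0 := fun g hg =>
          le_antisymm (by have := hA g hg; omega)
            (exZ_nonneg hr hunif ((Finset.erase_subset _ _).trans hS))
        suffices hle1 : exZ r S ≤ 1 by
          have hr1 : (1:ℤ) ≤ (r:ℤ) - 1 := by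
            have : (2:ℤ) ≤ (r:ℤ) := by exact_mod_cast hr
            omega
          have hzz : (0:ℤ) ≤ (S.card : ℤ) - z := by
            have : (z:ℤ) ≤ (S.card:ℤ) := by exact_mod_cast hzS
            omega
          refine ⟨hzS, by nlinarith, fun hlt => ?_⟩
          have : (1:ℤ) ≤ (S.card : ℤ) - z := by
            have : (z:ℤ) < (S.card:ℤ) := by exact_mod_cast hlt
            omega
          nlinarith
        by_contra hgt'
        have hgt : 2 ≤ exZ r S := by omega
        -- every sub-edge-set with positive excess is all of S
        have hcycall : ∀ C : Finset (Finset V), C ⊆ S → 1 ≤ exZ r C → C = S := by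
          intro C hCS hexC
          by_contra hne
          obtain ⟨g, hgS, hgC⟩ := Finset.exists_of_ssubset (hCS.ssubset_of_ne hne)
          have hsub : C ⊆ S.erase g := fun x hx =>
            Finset.mem_erase.mpr ⟨fun h => hgC (h ▸ hx), hCS hx⟩
          have := exZ_mono hr hunif hsub ((Finset.erase_subset _ _).trans hS)
          rw [hB g hgS] at this
          omega
        obtain ⟨e, heS⟩ := hSne
        have heE : e ∈ E := hS heS
        have hecard := hunif e heE
        have hS'sub : S.erase e ⊆ E := (Finset.erase_subset _ _).trans hS
        have hexins := exZ_insert hr (Finset.notMem_erase e S) hecard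
        rw [Finset.insert_erase heS, hB e heS] at hexins
        have hr1 := rm1_cast hr
        -- D + 2 ≤ r
        have hD : (e.image (Quot.mk (connRel (S.erase e)))).card + 2 ≤ r := by
          have h1 : ((e.image (Quot.mk (connRel (S.erase e)))).card : ℤ) + 2 ≤ (r:ℤ) := by
            rw [hexins, hr1] at hgt
            omega
          exact_mod_cast h1
        -- a helper: a minimum-length connection between two distinct vertices of e
        -- forces any walk between them to have length ≥ S.card - 1
        have getC : ∀ u' w' : V, u' ≠ w' → u' ∈ e → w' ∈ e → connRel (S.erase e) u' w' →
            ∀ l', HasWalk (S.erase e) u' w' l' → S.card ≤ l' + 1 := by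
          intro u' w' hne hu' hw' hconn l' hwalk'
          obtain ⟨l, x, f, hl1, hx0, hxl, hw, hlmin, hcyc, hcard⟩ :=
            exists_cycle_of_connRel hne hu' hw' (Finset.notMem_erase e S) hconn
          have hCS : insert e ((Finset.range l).image f) ⊆ S := by
            intro g hg
            rcases Finset.mem_insert.mp hg with rfl | hg'
            · exact heS
            · obtain ⟨k, hk, rfl⟩ := Finset.mem_image.mp hg'
              exact Finset.erase_subset _ _ (hw k (Finset.mem_range.mp hk)).1
          obtain ⟨hp2, vs2, es2, hvs2, hes2, hc2⟩ := hcyc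
          have hexC : 1 ≤ exZ r (insert e ((Finset.range l).image f)) :=
            one_le_exZ_of_cycle hr hunif (hCS.trans hS) (by omega) hvs2 hes2 hc2
              (le_of_eq hcard)
          have hCeq := hcycall _ hCS hexC
          have hlen : S.card = l + 1 := by rw [← hCeq, hcard]
          have := hlmin l' hwalk'
          omega
        -- first pair
        have hAcard : (e.image (Quot.mk (connRel (S.erase e)))).card < e.card := by
          rw [hecard]; omega
        obtain ⟨u, hu, v, hv, huv, hquot⟩ :=
          Finset.exists_ne_map_eq_of_card_lt_of_maps_to hAcard
            (fun a ha => Finset.mem_image_of_mem _ ha)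
        have hconnuv : connRel (S.erase e) u v := quotMk_eq_iff.mp hquot
        obtain ⟨l1, x1, f1, hl1, hx10, hx1l, hw1, hmin1, hcyc1, hcard1⟩ :=
          exists_cycle_of_connRel huv hu hv (Finset.notMem_erase e S) hconnuv
        have hC1S : insert e ((Finset.range l1).image f1) ⊆ S := by
          intro g hg
          rcases Finset.mem_insert.mp hg with rfl | hg'
          · exact heS
          · obtain ⟨k, hk, rfl⟩ := Finset.mem_image.mp hg'
            exact Finset.erase_subset _ _ (hw1 k (Finset.mem_range.mp hk)).1
        obtain ⟨hp2', vs1, es1, hvs1, hes1, hc1⟩ := hcyc1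
        have hexC1 : 1 ≤ exZ r (insert e ((Finset.range l1).image f1)) :=
          one_le_exZ_of_cycle hr hunif (hC1S.trans hS) (by omega) hvs1 hes1 hc1
            (le_of_eq hcard1)
        have hC1eq := hcycall _ hC1S hexC1
        have hlen1 : S.card = l1 + 1 := by rw [← hC1eq, hcard1]
        -- the path edges are exactly S.erase e
        have henotimg : e ∉ (Finset.range l1).image f1 := by
          intro hmem
          obtain ⟨k, hk, hke⟩ := Finset.mem_image.mp hmem
          exact (Finset.notMem_erase e S)
            (hke ▸ (hw1 k (Finset.mem_range.mp hk)).1)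
        have himgsub : (Finset.range l1).image f1 ⊆ S.erase e := by
          intro g hg
          obtain ⟨k, hk, rfl⟩ := Finset.mem_image.mp hg
          exact (hw1 k (Finset.mem_range.mp hk)).1
        have himg1 : (Finset.range l1).image f1 = S.erase e := by
          apply Finset.eq_of_subset_of_card_le himgsub
          have h1 : ((Finset.range l1).image f1).card + 1 = l1 + 1 := by
            rw [← hcard1, Finset.card_insert_of_notMem henotimg]
          have h2 : (S.erase e).card = S.card - 1 := Finset.card_erase_of_mem heS
          omega
        have hfedges : ∀ g ∈ S.erase e, ∃ k, k < l1 ∧ f1 k = g := by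
          intro g hg
          rw [← himg1] at hg
          obtain ⟨k, hk, rfl⟩ := Finset.mem_image.mp hg
          exact ⟨k, Finset.mem_range.mp hk, rfl⟩
        -- every covered vertex is connected to u
        have hcov : ∀ y : V, y ∈ (S.erase e).biUnion id → connRel (S.erase e) u y := by
          intro y hy
          obtain ⟨g, hgS', hyg⟩ := Finset.mem_biUnion.mp hy
          simp only [id] at hyg
          obtain ⟨k, hk, rfl⟩ := hfedges g hgS'
          have := hasWalk_to_mem hw1 hk hyg
          rw [hx10] at this
          exact connRel_of_hasWalk this
        have hucov : u ∈ (S.erase e).biUnion id := by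
          refine Finset.mem_biUnion.mpr ⟨f1 0, (hw1 0 (by omega)).1, ?_⟩
          have := (hw1 0 (by omega)).2.1
          rw [hx10] at this
          exact this
        -- D ≥ (number of uncovered vertices of e) + 1
        set uncov := e.filter (fun w => w ∉ (S.erase e).biUnion id) with huncov
        have hDge : uncov.card + 1 ≤ (e.image (Quot.mk (connRel (S.erase e)))).card := by
          have hsub2 : insert u uncov ⊆ e := by
            intro w hw
            rcases Finset.mem_insert.mp hw with rfl | hw'
            · exact hu
            · exact (Finset.mem_filter.mp hw').1
          have hinj : Set.InjOn (Quot.mk (connRel (S.erase e))) ↑(insert u uncov) := by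
            intro a ha b hb hab
            simp only [Finset.coe_insert, Set.mem_insert_iff, Finset.mem_coe] at ha hb
            have hconnab := quotMk_eq_iff.mp hab
            rcases ha with rfl | ha <;> rcases hb with rfl | hb
            · rfl
            · exact (eq_of_connRel_of_not_covered (Finset.mem_filter.mp hb).2
                (connRel_symm hconnab)).symm
            · exact eq_of_connRel_of_not_covered (Finset.mem_filter.mp ha).2 hconnab
            · exact eq_of_connRel_of_not_covered (Finset.mem_filter.mp ha).2 hconnab
          have hunotin : u ∉ uncov := by
            intro h
            exact (Finset.mem_filter.mp h).2 hucov
          calc uncov.card + 1 = (insert u uncov).card := by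
                rw [Finset.card_insert_of_notMem hunotin]
            _ = ((insert u uncov).image (Quot.mk (connRel (S.erase e)))).card :=
                (Finset.card_image_of_injOn hinj).symm
            _ ≤ _ := Finset.card_le_card (Finset.image_subset_image hsub2)
        -- so there are at least 3 covered vertices of e
        have hcove : r - uncov.card = (e.filter (fun w => w ∈ (S.erase e).biUnion id)).card := by
          have h9 := Finset.card_filter_add_card_filter_not
            (s := e) (p := fun w => w ∈ (S.erase e).biUnion id)
          rw [huncov, ← hecard]
          omega
        have hthree : 3 ≤ (e.filter (fun w => w ∈ (S.erase e).biUnion id)).card := by omega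
        -- pick w covered, different from u and v
        have hwex : ((e.filter (fun w => w ∈ (S.erase e).biUnion id)) \ {u, v}).Nonempty := by
          rw [← Finset.card_pos]
          have h1 : ({u, v} : Finset V).card = 2 := Finset.card_pair huv
          have := Finset.le_card_sdiff ({u, v} : Finset V)
            (e.filter (fun w => w ∈ (S.erase e).biUnion id))
          omega
        obtain ⟨w, hw⟩ := hwex
        have hwfil := (Finset.mem_sdiff.mp hw).1
        have hwe : w ∈ e := (Finset.mem_filter.mp hwfil).1
        have hwcov : w ∈ (S.erase e).biUnion id := (Finset.mem_filter.mp hwfil).2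
        have hwu : w ≠ u := fun h =>
          (Finset.mem_sdiff.mp hw).2 (by rw [h]; exact Finset.mem_insert_self _ _)
        have hwv : w ≠ v := fun h => (Finset.mem_sdiff.mp hw).2 (by rw [h]; simp)
        -- w lies on some path edge f1 k
        obtain ⟨g, hgS', hwg⟩ := Finset.mem_biUnion.mp hwcov
        simp only [id] at hwg
        obtain ⟨k, hk, rfl⟩ := hfedges g hgS'
        -- walk from u to w of length k+1
        have hwalk_uw : HasWalk (S.erase e) u w (k+1) := by
          have := hasWalk_to_mem hw1 hk hwg
          rwa [hx10] at this
        -- walk from v to w of length l1 - k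
        have hrev : IsWalk (S.erase e) (fun j => x1 (l1 - j)) (fun j => f1 (l1 - 1 - j)) l1 :=
          isWalk_reverse hw1
        have hwalk_vw : HasWalk (S.erase e) v w (l1 - k) := by
          have hj : l1 - 1 - k < l1 := by omega
          have hwg2 : w ∈ (fun j => f1 (l1 - 1 - j)) (l1 - 1 - k) := by
            have h7 : l1 - 1 - (l1 - 1 - k) = k := by omega
            show w ∈ f1 (l1 - 1 - (l1 - 1 - k))
            rw [h7]; exact hwg
          have h8 := hasWalk_to_mem hrev hj hwg2
          simp only [Nat.sub_zero, hx1l] at h8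
          have heq : l1 - 1 - k + 1 = l1 - k := by omega
          rwa [heq] at h8
        have hb1 := getC u w hwu.symm hu hwe (connRel_of_hasWalk hwalk_uw) (k+1) hwalk_uw
        have hb2 := getC v w hwv.symm hv hwe (connRel_of_hasWalk hwalk_vw) (l1 - k) hwalk_vw
        omega
  intro S hS hex
  exact key S.card S le_rfl hS hex


lemma zpow_tendsto {b : ℤ} (hb : b < 0) :
    Filter.Tendsto (fun k : ℕ => ((k:ℚ))^b) Filter.atTop (nhds 0) :=
  (tendsto_zpow_atTop_zero hb).comp tendsto_natCast_atTop_atTop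

lemma mono_count (S : Finset (Finset V)) (k : ℕ) :
    ((univ : Finset (V → Fin k)).filter
      (fun f => ∀ e ∈ S, ∀ u ∈ e, ∀ v ∈ e, f u = f v)).card = k ^ nCompsFull S := by
  have hequiv : {f : V → Fin k // ∀ e ∈ S, ∀ u ∈ e, ∀ v ∈ e, f u = f v} ≃
      (Quot (connRel S) → Fin k) :=
    { toFun := fun f => Quot.lift f.1 (fun a b h => by
        induction h with
        | refl => rfl
        | tail h1 h2 ih =>
          obtain ⟨g, hg, hw, hv⟩ := h2
          exact ih.trans (f.2 g hg _ hw _ hv))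
      invFun := fun g => ⟨fun v => g (Quot.mk _ v), fun e he u hu v hv =>
        congrArg g (Quot.sound (Relation.ReflTransGen.single ⟨e, he, hu, hv⟩))⟩
      left_inv := fun f => Subtype.ext rfl
      right_inv := fun g => by
        funext q
        induction q using Quot.ind with | _ v => rfl }
  have h1 : Nat.card {f : V → Fin k // ∀ e ∈ S, ∀ u ∈ e, ∀ v ∈ e, f u = f v}
      = k ^ nCompsFull S := by
    rw [Nat.card_congr hequiv]
    letI : Fintype (Quot (connRel S)) := Fintype.ofFinite _
    rw [Nat.card_eq_fintype_card, Fintype.card_fun, Fintype.card_fin, nCompsFull,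
      Nat.card_eq_fintype_card]
  rw [← h1, Nat.card_eq_fintype_card, Fintype.card_subtype]

lemma incl_excl (E : Finset (Finset V)) (k : ℕ) :
    (chromPoly E k : ℤ) = ∑ S ∈ E.powerset, (-1:ℤ)^S.card * (k:ℤ)^(nCompsFull S) := by
  have hstep : ∀ S ∈ E.powerset, (-1:ℤ)^S.card * (k:ℤ)^(nCompsFull S) =
      ∑ f ∈ (univ : Finset (V → Fin k)).filter
        (fun f => ∀ e ∈ S, ∀ u ∈ e, ∀ v ∈ e, f u = f v), (-1:ℤ)^S.card := by
    intro S _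
    rw [Finset.sum_const, nsmul_eq_mul, mono_count S k]
    push_cast
    ring
  rw [Finset.sum_congr rfl hstep]
  have hswap : ∀ S ∈ E.powerset, (∑ f ∈ (univ : Finset (V → Fin k)).filter
        (fun f => ∀ e ∈ S, ∀ u ∈ e, ∀ v ∈ e, f u = f v), (-1:ℤ)^S.card)
      = ∑ f : V → Fin k,
          if (∀ e ∈ S, ∀ u ∈ e, ∀ v ∈ e, f u = f v) then (-1:ℤ)^S.card else 0 :=
    fun S _ => Finset.sum_filter _ _
  rw [Finset.sum_congr rfl hswap, Finset.sum_comm]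
  have hinner : ∀ f : V → Fin k, (∑ S ∈ E.powerset,
        if (∀ e ∈ S, ∀ u ∈ e, ∀ v ∈ e, f u = f v) then (-1:ℤ)^S.card else 0)
      = if (E.filter (fun e => ∀ u ∈ e, ∀ v ∈ e, f u = f v)) = ∅ then 1 else 0 := by
    intro f
    rw [← Finset.sum_filter]
    have hps : E.powerset.filter (fun S => ∀ e ∈ S, ∀ u ∈ e, ∀ v ∈ e, f u = f v)
        = (E.filter (fun e => ∀ u ∈ e, ∀ v ∈ e, f u = f v)).powerset := by
      ext S
      simp only [Finset.mem_filter, Finset.mem_powerset, Finset.subset_iff, Finset.mem_filter]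
      constructor
      · rintro ⟨hSE, hmono⟩ x hx
        exact ⟨hSE hx, hmono x hx⟩
      · intro h
        exact ⟨fun x hx => (h hx).1, fun x hx => (h hx).2⟩
    rw [hps, Finset.sum_powerset_neg_one_pow_card]
  rw [Finset.sum_congr rfl (fun f _ => hinner f), Finset.sum_boole]
  have hiff : ∀ f : V → Fin k, ProperColoring E k f ↔
      (E.filter (fun e => ∀ u ∈ e, ∀ v ∈ e, f u = f v)) = ∅ := by
    intro f
    rw [Finset.filter_eq_empty_iff]
    apply forall₂_congr
    intro e he
    constructor
    · rintro ⟨u, hu, v, hv, hne⟩ hmono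
      exact hne (hmono u hu v hv)
    · intro h
      by_contra hcon
      push_neg at hcon
      exact h hcon
  have hcp : chromPoly E k = ((univ : Finset (V → Fin k)).filter
      (fun f => (E.filter (fun e => ∀ u ∈ e, ∀ v ∈ e, f u = f v)) = ∅)).card := by
    rw [chromPoly, Nat.card_eq_fintype_card, Fintype.card_subtype]
    congr 1
    apply Finset.filter_congr
    intro f _
    exact hiff f
  rw [hcp]


end AuxLemmas

set_option maxHeartbeats 1000000

open Filter in
/-- for a connected `r`-uniform linear hypergraph with even girth `z` and
`t ≥ 1` cycles of length `z`, the difference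
`D(k) = P(H,k) - k^{n-(r-1)m}(k^{r-1}-1)^m` has leading term `t·k^{n-z(r-1)+1}`;
in particular `D(k) > 0` for all large `k`. -/
theorem stmt6 [Fintype V] [DecidableEq V] (E : Finset (Finset V)) (r : ℕ) (hr : 2 ≤ r)
    (hunif : Uniform E r) (hlin : Linear E) (hconn : Connected E)
    (z : ℕ) (hz : Even z) (hcyc : IsCycle E z) (hmin : ∀ p, 2 ≤ p → p < z → ¬ IsCycle E p)
    (t : ℕ) (ht : t = (E.powerset.filter fun S => S.card = z ∧ IsCycle S z).card)
    (ht1 : 1 ≤ t) :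
    Tendsto
      (fun k : ℕ =>
        ((chromPoly E k : ℚ) -
            (k : ℚ) ^ ((Fintype.card V : ℤ) - (r - 1 : ℕ) * E.card) *
              ((k : ℚ) ^ (r - 1) - 1) ^ E.card) /
          (k : ℚ) ^ (Fintype.card V - z * (r - 1) + 1))
      atTop (nhds (t : ℚ)) ∧
    ∃ N : ℕ, ∀ k ≥ N,
      0 < (chromPoly E k : ℚ) -
            (k : ℚ) ^ ((Fintype.card V : ℤ) - (r - 1 : ℕ) * E.card) *
              ((k : ℚ) ^ (r - 1) - 1) ^ E.card := by
  classical
  obtain ⟨hz2, vs0, es0, hvs0, hes0, hcyc0⟩ := hcyc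
  haveI : NeZero z := ⟨by omega⟩
  haveI hVne : Nonempty V := ⟨vs0 0⟩
  have hrm := rm1_cast hr
  have hz4 : 4 ≤ z := by
    by_contra hlt
    have hz2' : z = 2 := by
      rcases hz with ⟨w, hw⟩
      omega
    subst hz2'
    have h01 : (0 : ZMod 2) ≠ 1 := by decide
    have he01 : es0 0 ≠ es0 1 := fun h => h01 (hes0 h)
    have hv01 : vs0 0 ≠ vs0 1 := fun h => h01 (hvs0 h)
    have hmem1 : vs0 0 ∈ es0 0 := (hcyc0 0).2.1
    have hmem2 : vs0 0 ∈ es0 1 := by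
      have h := (hcyc0 0).2.2
      have h2 : (0 + 1 : ZMod 2) = 1 := by decide
      rwa [h2] at h
    have hmem3 : vs0 1 ∈ es0 1 := (hcyc0 1).2.1
    have hmem4 : vs0 1 ∈ es0 0 := by
      have h := (hcyc0 1).2.2
      have h2 : (1 + 1 : ZMod 2) = 0 := by decide
      rwa [h2] at h
    have hpair : ({vs0 0, vs0 1} : Finset V) ⊆ es0 0 ∩ es0 1 := by
      intro y hy
      rcases Finset.mem_insert.mp hy with rfl | hy'
      · exact Finset.mem_inter.mpr ⟨hmem1, hmem2⟩
      · rw [Finset.mem_singleton.mp hy']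
        exact Finset.mem_inter.mpr ⟨hmem4, hmem3⟩
    have hlc := hlin (es0 0) (hcyc0 0).1 (es0 1) (hcyc0 1).1 he01
    have hc2 := Finset.card_le_card hpair
    rw [Finset.card_pair hv01] at hc2
    omega
  have hmain := main_bound hr hz4 hunif hlin hmin
  -- the base cycle shows n ≥ z (r-1)
  have hcyc0' : ∀ i, es0 i ∈ Finset.univ.image es0 ∧ vs0 i ∈ es0 i ∧ vs0 i ∈ es0 (i+1) :=
    fun i => ⟨Finset.mem_image_of_mem es0 (Finset.mem_univ i), (hcyc0 i).2⟩
  have hC0E : Finset.univ.image es0 ⊆ E := by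
    intro g hg
    obtain ⟨i, _, rfl⟩ := Finset.mem_image.mp hg
    exact (hcyc0 i).1
  have hC0card : (Finset.univ.image es0).card = z := cycle_image_card hes0
  have hex0 : 1 ≤ exZ r (Finset.univ.image es0) :=
    one_le_exZ_of_cycle hr hunif hC0E hz2 hvs0 hes0 hcyc0' (le_of_eq hC0card)
  have hbound0 := (hmain _ hC0E hex0).2.1
  rw [hC0card] at hbound0
  have hex0' : exZ r (Finset.univ.image es0) = 1 := by
    have h0 : ((z:ℤ) - z) = 0 := by ring
    rw [h0, mul_zero] at hbound0
    omega
  have hcF0 : 1 ≤ nCompsFull (Finset.univ.image es0) := by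
    rw [nCompsFull]
    haveI : Nonempty (Quot (connRel (Finset.univ.image es0))) :=
      ⟨Quot.mk _ (Classical.arbitrary V)⟩
    exact Nat.card_pos
  have hnz : z * (r-1) ≤ Fintype.card V := by
    have h1 := hex0'
    simp only [exZ] at h1
    rw [hC0card, hrm] at h1
    have h2 : (1:ℤ) ≤ (nCompsFull (Finset.univ.image es0) : ℤ) := by exact_mod_cast hcF0
    have h3 : ((z * (r-1) : ℕ) : ℤ) ≤ (Fintype.card V : ℤ) := by
      push_cast [hrm]
      nlinarith [h1, h2]
    exact_mod_cast h3
  have hMcast : ((Fintype.card V - z*(r-1) + 1 : ℕ) : ℤ)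
      = (Fintype.card V : ℤ) - (z:ℤ) * ((r:ℤ)-1) + 1 := by
    push_cast [Nat.cast_sub hnz, hrm]
    ring
  -- classification of the top-order subsets
  have hclass : ∀ S : Finset (Finset V), S ⊆ E →
      ((1 ≤ exZ r S ∧ (nCompsFull S : ℤ) = (Fintype.card V : ℤ) - (z:ℤ)*((r:ℤ)-1) + 1)
        ↔ (S.card = z ∧ IsCycle S z)) := by
    intro S hS
    constructor
    · rintro ⟨hex, hcF⟩
      obtain ⟨hz1, hz2', hz3⟩ := hmain S hS hex
      have hexval : exZ r S = ((r:ℤ)-1) * ((S.card:ℤ) - z) + 1 := by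
        simp only [exZ]
        rw [hrm, hcF]
        ring
      have hcardz : S.card = z := by
        by_contra hne
        have hlt : z < S.card := by omega
        have hb := hz3 hlt
        rw [hexval] at hb
        linarith
      refine ⟨hcardz, ?_⟩
      obtain ⟨p, hp⟩ := exists_cycle_of_exZ hr hunif hS hex
      have hpz : p = z := by
        have h1 : ¬ p < z := fun h => hmin p hp.1 h (hp.mono hS)
        have h2 := hp.card_le
        omega
      rwa [hpz] at hp
    · rintro ⟨hcardz, hcycS⟩
      obtain ⟨_, vs1, es1, hvs1, hes1, hcyc1⟩ := hcycS
      have hex1 : 1 ≤ exZ r S :=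
        one_le_exZ_of_cycle hr hunif hS hz2 hvs1 hes1 hcyc1 (le_of_eq hcardz)
      refine ⟨hex1, ?_⟩
      have hb := (hmain S hS hex1).2.1
      rw [hcardz] at hb
      have hb1 : exZ r S = 1 := by
        have h0 : ((z:ℤ) - z) = 0 := by ring
        rw [h0, mul_zero] at hb
        omega
      simp only [exZ] at hb1
      rw [hrm, hcardz] at hb1
      linarith
  -- the identity, for k ≥ 1
  have hident : ∀ k : ℕ, 1 ≤ k →
      ((chromPoly E k : ℚ) -
          (k : ℚ) ^ ((Fintype.card V : ℤ) - (r - 1 : ℕ) * E.card) *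
            ((k : ℚ) ^ (r - 1) - 1) ^ E.card) /
        (k : ℚ) ^ (Fintype.card V - z * (r - 1) + 1)
      = ∑ S ∈ E.powerset, (-1:ℚ)^S.card *
          ((k:ℚ)^((nCompsFull S : ℤ) - ((Fintype.card V : ℤ) - (z:ℤ)*((r:ℤ)-1) + 1)) -
           (k:ℚ)^((((Fintype.card V:ℤ) - (r-1:ℕ)*S.card)) -
             ((Fintype.card V : ℤ) - (z:ℤ)*((r:ℤ)-1) + 1))) := by
    intro k hk
    have hxpos : (0:ℚ) < (k:ℚ) := by
      have : (0:ℕ) < k := by omega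
      exact_mod_cast this
    have hx : (k:ℚ) ≠ 0 := hxpos.ne'
    have h1 : (chromPoly E k : ℚ)
        = ∑ S ∈ E.powerset, (-1:ℚ)^S.card * (k:ℚ)^(nCompsFull S) := by
      have h0 := congrArg (fun x : ℤ => (x:ℚ)) (incl_excl E k)
      push_cast at h0
      exact h0
    have h2 : ((k:ℚ)^(r-1) - 1)^E.card
        = ∑ S ∈ E.powerset, (-1:ℚ)^S.card * ((k:ℚ)^(r-1))^(E.card - S.card) := by
      have ha : ((k:ℚ)^(r-1) - 1)^E.card = ∏ _e ∈ E, ((-1) + (k:ℚ)^(r-1)) := by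
        rw [Finset.prod_const]
        congr 1
        ring
      rw [ha, Finset.prod_add]
      apply Finset.sum_congr rfl
      intro S hS
      rw [Finset.prod_const, Finset.prod_const,
        Finset.card_sdiff_of_subset (Finset.mem_powerset.mp hS)]
    rw [h1, h2, Finset.mul_sum, ← Finset.sum_sub_distrib, Finset.sum_div]
    apply Finset.sum_congr rfl
    intro S hS
    have hcm : S.card ≤ E.card := Finset.card_le_card (Finset.mem_powerset.mp hS)
    have e1 : (k:ℚ)^(nCompsFull S) = (k:ℚ)^((nCompsFull S : ℕ) : ℤ) :=
      (zpow_natCast _ _).symm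
    have e2 : (k : ℚ) ^ ((Fintype.card V : ℤ) - (r - 1 : ℕ) * E.card) *
        ((k:ℚ)^(r-1))^(E.card - S.card)
        = (k:ℚ)^((Fintype.card V:ℤ) - (r-1:ℕ)*S.card) := by
      rw [← pow_mul, ← zpow_natCast (k:ℚ) ((r-1)*(E.card - S.card)), ← zpow_add₀ hx]
      congr 1
      push_cast [Nat.cast_sub hcm]
      ring
    have e4 : (k : ℚ) ^ ((Fintype.card V : ℤ) - (r - 1 : ℕ) * E.card) *
        ((-1:ℚ)^S.card * ((k:ℚ)^(r-1))^(E.card - S.card))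
        = (-1:ℚ)^S.card * (k:ℚ)^((Fintype.card V:ℤ) - (r-1:ℕ)*S.card) := by
      rw [mul_left_comm, e2]
    have e3 : (k:ℚ)^(Fintype.card V - z*(r-1)+1)
        = (k:ℚ)^(((Fintype.card V - z*(r-1)+1 : ℕ)) : ℤ) := (zpow_natCast _ _).symm
    rw [e1, e4, e3, hMcast]
    generalize (nCompsFull S : ℤ) = a
    generalize ((Fintype.card V : ℤ) - (z:ℤ) * ((r:ℤ)-1) + 1) = c0
    generalize (((Fintype.card V:ℤ) - (r-1:ℕ) * S.card)) = b
    rw [zpow_sub₀ hx, zpow_sub₀ hx]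
    ring
  -- termwise limits
  have hterm : ∀ S ∈ E.powerset, Filter.Tendsto (fun k : ℕ => (-1:ℚ)^S.card *
      ((k:ℚ)^((nCompsFull S : ℤ) - ((Fintype.card V : ℤ) - (z:ℤ)*((r:ℤ)-1) + 1)) -
       (k:ℚ)^((((Fintype.card V:ℤ) - (r-1:ℕ)*S.card)) -
         ((Fintype.card V : ℤ) - (z:ℤ)*((r:ℤ)-1) + 1)))) Filter.atTop
      (nhds (if S.card = z ∧ IsCycle S z then (1:ℚ) else 0)) := by
    intro S hS
    have hSE := Finset.mem_powerset.mp hS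
    have hex_nonneg := exZ_nonneg hr hunif hSE
    rcases eq_or_lt_of_le hex_nonneg with hz0 | hz1
    · -- zero excess: the term vanishes identically
      have heq : (nCompsFull S : ℤ) - ((Fintype.card V : ℤ) - (z:ℤ)*((r:ℤ)-1) + 1)
          = (((Fintype.card V:ℤ) - (r-1:ℕ)*S.card)) -
            ((Fintype.card V : ℤ) - (z:ℤ)*((r:ℤ)-1) + 1) := by
        have h0 := hz0.symm
        simp only [exZ] at h0
        linarith
      have hcS : ¬ (S.card = z ∧ IsCycle S z) := by
        intro hcl
        have h1 := ((hclass S hSE).mpr hcl).1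
        omega
      rw [if_neg hcS]
      have hfun : (fun k : ℕ => (-1:ℚ)^S.card *
          ((k:ℚ)^((nCompsFull S : ℤ) - ((Fintype.card V : ℤ) - (z:ℤ)*((r:ℤ)-1) + 1)) -
           (k:ℚ)^((((Fintype.card V:ℤ) - (r-1:ℕ)*S.card)) -
             ((Fintype.card V : ℤ) - (z:ℤ)*((r:ℤ)-1) + 1)))) = fun _ => (0:ℚ) := by
        funext k
        rw [heq, sub_self, mul_zero]
      rw [hfun]
      exact tendsto_const_nhds
    · have hex1 : 1 ≤ exZ r S := hz1
      obtain ⟨hcz, hble, _⟩ := hmain S hSE hex1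
      have hexdef : exZ r S = ((r-1:ℕ):ℤ) * S.card + (nCompsFull S : ℤ)
          - (Fintype.card V : ℤ) := rfl
      have haS : (nCompsFull S : ℤ) - ((Fintype.card V : ℤ) - (z:ℤ)*((r:ℤ)-1) + 1) ≤ 0 := by
        rw [hexdef, hrm] at hble hex1
        have hcz' : (z:ℤ) ≤ (S.card : ℤ) := by exact_mod_cast hcz
        nlinarith [hble]
      have hb : (((Fintype.card V:ℤ) - (r-1:ℕ)*S.card)) -
          ((Fintype.card V : ℤ) - (z:ℤ)*((r:ℤ)-1) + 1) < 0 := by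
        rw [hexdef, hrm] at hex1
        rw [hrm]
        nlinarith [haS, hex1]
      rcases eq_or_lt_of_le haS with ha0 | haneg
      · have hcF : (nCompsFull S : ℤ) = (Fintype.card V : ℤ) - (z:ℤ)*((r:ℤ)-1) + 1 := by
          linarith
        have hcl := (hclass S hSE).mp ⟨hex1, hcF⟩
        rw [if_pos hcl]
        have hcard_even : Even S.card := hcl.1 ▸ hz
        have hlim2 : Filter.Tendsto (fun k : ℕ =>
            (k:ℚ)^((((Fintype.card V:ℤ) - (r-1:ℕ)*S.card)) -
              ((Fintype.card V : ℤ) - (z:ℤ)*((r:ℤ)-1) + 1))) Filter.atTop (nhds 0) :=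
          zpow_tendsto hb
        have hlim1 : Filter.Tendsto (fun k : ℕ =>
            (k:ℚ)^((nCompsFull S : ℤ) - ((Fintype.card V : ℤ) - (z:ℤ)*((r:ℤ)-1) + 1)))
            Filter.atTop (nhds 1) := by
          rw [ha0]
          simpa using (tendsto_const_nhds :
            Filter.Tendsto (fun _ : ℕ => (1:ℚ)) Filter.atTop (nhds 1))
        have h2 := (hlim1.sub hlim2).const_mul ((-1:ℚ)^S.card)
        have hone : ((-1:ℚ))^S.card = 1 := hcard_even.neg_one_pow
        simp only [hone, one_mul, sub_zero, mul_one] at h2 ⊢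
        exact h2
      · have hcS : ¬ (S.card = z ∧ IsCycle S z) := by
          intro hcl
          have h1 := ((hclass S hSE).mpr hcl).2
          omega
        rw [if_neg hcS]
        have h2 := ((zpow_tendsto haneg).sub (zpow_tendsto hb)).const_mul ((-1:ℚ)^S.card)
        simpa using h2
  have hsum := tendsto_finset_sum E.powerset hterm
  have hsumval : (∑ S ∈ E.powerset, if S.card = z ∧ IsCycle S z then (1:ℚ) else 0)
      = (t:ℚ) := by
    rw [Finset.sum_boole, ht]
  rw [hsumval] at hsum
  have htend : Filter.Tendsto
      (fun k : ℕ =>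
        ((chromPoly E k : ℚ) -
            (k : ℚ) ^ ((Fintype.card V : ℤ) - (r - 1 : ℕ) * E.card) *
              ((k : ℚ) ^ (r - 1) - 1) ^ E.card) /
          (k : ℚ) ^ (Fintype.card V - z * (r - 1) + 1))
      Filter.atTop (nhds (t:ℚ)) := by
    apply hsum.congr'
    filter_upwards [Filter.eventually_ge_atTop 1] with k hk
    exact (hident k hk).symm
  refine ⟨htend, ?_⟩
  have hpos : (0:ℚ) < (t:ℚ) := by
    have : (0:ℕ) < t := by omega
    exact_mod_cast this
  have hev := (htend.eventually (eventually_gt_nhds hpos)).and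
    (Filter.eventually_ge_atTop 1)
  obtain ⟨N, hN⟩ := Filter.eventually_atTop.mp hev
  refine ⟨N, fun k hk => ?_⟩
  obtain ⟨h1, h2⟩ := hN k hk
  have hkpos : (0:ℚ) < (k:ℚ)^(Fintype.card V - z*(r-1)+1) := by
    have h3 : (0:ℚ) < (k:ℚ) := by
      have : (0:ℕ) < k := by omega
      exact_mod_cast this
    positivity
  have h4 := mul_pos h1 hkpos
  rwa [div_mul_cancel₀ _ hkpos.ne'] at h4
end
end

section
/- Let H be a hypergraph containing an edge e with |e| = n_e ≥ 2 such that H − e has exactly n_e − 1 connected components. Suppose for a given integer k ≥ 2 that P(H − e, k) < (k^{n_e−1}/(k^{n_e−1} − 1)) · P(H, k). Then P_{DP}(H, k) < P(H, k). -/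
/-
Common definitions: a hypergraph on a finite vertex type `V` is given by its
edge set `E : Finset (Finset V)` (each edge of size ≥ 2).
-/

noncomputable section
open Finset

attribute [local instance] Classical.propDecidable

variable {V : Type*}

section Stmt10Aux
variable [Fintype V] [DecidableEq V]

lemma chromPoly_eq_card (E : Finset (Finset V)) (k : ℕ) :
    chromPoly E k = (univ.filter fun f : V → Fin k => ProperColoring E k f).card := by
  rw [chromPoly, Nat.card_eq_fintype_card, Fintype.card_subtype]

lemma dpCount_eq_card (k : ℕ) (F : Finset (V → Option (Fin k))) :
    dpCount k F = (univ.filter fun f : V → Fin k => ∀ φ ∈ F, ¬ SubMap φ f).card := by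
  rw [dpCount, Nat.card_eq_fintype_card, Fintype.card_subtype]

/-- The number of proper colorings of `E` whose restriction to `e` is the pattern `q`. -/
def patCnt (E : Finset (Finset V)) (k : ℕ) (e : Finset V) (q : V → Fin k) : ℕ :=
  (univ.filter fun f : V → Fin k => ProperColoring E k f ∧ ∀ v ∈ e, f v = q v).card

lemma proper_shift {E : Finset (Finset V)} {k : ℕ} [NeZero k] (f : V → Fin k) (c : Fin k) :
    ProperColoring E k (fun v => f v + c) ↔ ProperColoring E k f := by
  constructor
  · intro h e' he'
    obtain ⟨u, hu, v, hv, hne⟩ := h e' he'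
    exact ⟨u, hu, v, hv, fun hc => hne (by simp only [hc])⟩
  · intro h e' he'
    obtain ⟨u, hu, v, hv, hne⟩ := h e' he'
    exact ⟨u, hu, v, hv, fun hc => hne ((add_left_inj (a := c) (G := Fin k)).mp hc)⟩

lemma patCnt_shift (E : Finset (Finset V)) (k : ℕ) [NeZero k] (e : Finset V)
    (q : V → Fin k) (c : Fin k) :
    patCnt E k e (fun v => q v + c) = patCnt E k e q := by
  unfold patCnt
  apply Finset.card_bij' (fun f _ => fun v => f v - c) (fun f _ => fun v => f v + c)
  · intro f hf
    simp only [mem_filter, mem_univ, true_and] at hf ⊢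
    obtain ⟨hp, hq⟩ := hf
    constructor
    · have hfe : (fun v => f v - c) = (fun v => f v + (-c)) := by
        funext v; exact sub_eq_add_neg _ _
      rw [hfe]
      exact (proper_shift f (-c)).mpr hp
    · intro v hv
      rw [hq v hv]
      exact add_sub_cancel_right (G := Fin k) _ _
  · intro f hf
    simp only [mem_filter, mem_univ, true_and] at hf ⊢
    obtain ⟨hp, hq⟩ := hf
    exact ⟨(proper_shift f c).mpr hp, fun v hv => by rw [hq v hv]⟩
  · intro f _
    funext v
    exact sub_add_cancel (G := Fin k) _ _
  · intro f _
    funext v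
    exact add_sub_cancel_right (G := Fin k) _ _

end Stmt10Aux

/-- if `c(H-e) = |e| - 1` and
`P(H-e,k) < (k^{n_e-1}/(k^{n_e-1}-1))·P(H,k)` (cleared of denominators), then
`P_DP(H,k) < P(H,k)`. -/
theorem stmt10 [Fintype V] [DecidableEq V] (E : Finset (Finset V))
    (hE : ∀ e' ∈ E, 2 ≤ e'.card) (e : Finset V) (he : e ∈ E)
    (hcomp : nCompsFull (E.erase e) = e.card - 1) (k : ℕ) (hk : 2 ≤ k)
    (hineq : (k ^ (e.card - 1) - 1) * chromPoly (E.erase e) k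
              < k ^ (e.card - 1) * chromPoly E k) :
    dpPoly E k < chromPoly E k := by
  haveI : NeZero k := ⟨by omega⟩
  have he2 : 2 ≤ e.card := hE e he
  have hpow : k ^ (e.card - 1) * k = k ^ e.card := by
    rw [← pow_succ]
    congr 1
    omega
  obtain ⟨v₀, hv₀⟩ : e.Nonempty := Finset.card_pos.mp (by omega)
  -- split of proper colorings of E
  have hsplitE : ∀ f : V → Fin k, ProperColoring E k f ↔
      (ProperColoring (E.erase e) k f ∧ ¬ ∃ c : Fin k, ∀ v ∈ e, f v = c) := by
    intro f
    constructor
    · intro hf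
      refine ⟨fun e' he' => hf e' (mem_of_mem_erase he'), ?_⟩
      rintro ⟨c, hc⟩
      obtain ⟨u, hu, v, hv, hne⟩ := hf e he
      exact hne (by rw [hc u hu, hc v hv])
    · rintro ⟨hf, hnc⟩ e' he'
      by_cases hee : e' = e
      · subst hee
        by_contra hall
        push_neg at hall
        exact hnc ⟨f v₀, fun v hv => hall v hv v₀ hv₀⟩
      · exact hf e' (mem_erase.mpr ⟨hee, he'⟩)
  -- mono count
  have hmonosum : ((univ.filter fun f : V → Fin k =>
      ProperColoring (E.erase e) k f).filter fun f => ∃ c : Fin k, ∀ v ∈ e, f v = c).card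
      = k * patCnt (E.erase e) k e (fun _ => (0 : Fin k)) := by
    rw [Finset.card_eq_sum_card_fiberwise (f := fun f : V → Fin k => f v₀)
      (t := (univ : Finset (Fin k))) (fun _ _ => mem_univ _)]
    trans (∑ _c : Fin k, patCnt (E.erase e) k e (fun _ => (0 : Fin k)))
    · refine Finset.sum_congr rfl fun c _ => ?_
      have hac : patCnt (E.erase e) k e (fun _ => (0 : Fin k))
          = patCnt (E.erase e) k e (fun _ => c) := by
        rw [← patCnt_shift (E.erase e) k e (fun _ => (0 : Fin k)) c]
        congr 1
        funext v
        rw [zero_add]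
      rw [hac]
      unfold patCnt
      congr 1
      ext f
      simp only [Finset.mem_filter, Finset.mem_univ, true_and]
      constructor
      · rintro ⟨⟨hp, c', hc'⟩, hc⟩
        exact ⟨hp, fun v hv => by rw [hc' v hv, ← hc' v₀ hv₀, hc]⟩
      · rintro ⟨hp, hc⟩
        exact ⟨⟨hp, c, hc⟩, hc v₀ hv₀⟩
    · rw [Finset.sum_const, card_univ, Fintype.card_fin, smul_eq_mul]
  -- complement of mono = proper colorings of E
  have hcompl : ((univ.filter fun f : V → Fin k =>
      ProperColoring (E.erase e) k f).filter fun f =>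
        ¬ ∃ c : Fin k, ∀ v ∈ e, f v = c).card
      = (univ.filter fun f : V → Fin k => ProperColoring E k f).card := by
    congr 1
    ext f
    simp only [Finset.mem_filter, Finset.mem_univ, true_and]
    exact (hsplitE f).symm
  -- P' = P + k*alpha
  have hA : chromPoly (E.erase e) k
      = chromPoly E k + k * patCnt (E.erase e) k e (fun _ => (0 : Fin k)) := by
    have h1 := Finset.card_filter_add_card_filter_not
      (s := univ.filter fun f : V → Fin k => ProperColoring (E.erase e) k f)
      (p := fun f : V → Fin k => ∃ c : Fin k, ∀ v ∈ e, f v = c)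
    rw [chromPoly_eq_card, chromPoly_eq_card, ← h1, hmonosum, Nat.add_comm]
    congr 1
  -- from hineq : k^|e| * alpha < P'
  have hB : k ^ e.card * patCnt (E.erase e) k e (fun _ => (0 : Fin k))
      < chromPoly (E.erase e) k := by
    have h1 : (k ^ (e.card - 1) - 1) * chromPoly (E.erase e) k
        = k ^ (e.card - 1) * chromPoly (E.erase e) k - chromPoly (E.erase e) k :=
      Nat.sub_one_mul _ _
    have h2 : k ^ (e.card - 1) * chromPoly (E.erase e) k
        = k ^ (e.card - 1) * chromPoly E k
          + k ^ e.card * patCnt (E.erase e) k e (fun _ => (0 : Fin k)) := by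
      rw [hA, Nat.mul_add, ← Nat.mul_assoc, hpow]
    rw [h1, h2] at hineq
    clear * - hineq
    omega
  -- pigeonhole
  have hqex : ∃ q : V → Fin k,
      patCnt (E.erase e) k e (fun _ => (0 : Fin k)) < patCnt (E.erase e) k e q := by
    by_contra hno
    push_neg at hno
    have hle : chromPoly (E.erase e) k
        ≤ k ^ e.card * patCnt (E.erase e) k e (fun _ => (0 : Fin k)) := by
      rw [chromPoly_eq_card, Finset.card_eq_sum_card_fiberwise
        (f := fun f : V → Fin k => (fun v : e => f v.1))
        (t := (univ : Finset (e → Fin k))) (fun _ _ => mem_univ _)]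
      trans (∑ _b : e → Fin k, patCnt (E.erase e) k e (fun _ => (0 : Fin k)))
      · refine Finset.sum_le_sum fun b _ => ?_
        refine le_trans (le_of_eq ?_)
          (hno (fun v => if h : v ∈ e then b ⟨v, h⟩ else 0))
        unfold patCnt
        congr 1
        ext f
        simp only [Finset.mem_filter, Finset.mem_univ, true_and]
        constructor
        · rintro ⟨hp, hbb⟩
          refine ⟨hp, fun v hv => ?_⟩
          simp only [dif_pos hv]
          exact congrFun hbb ⟨v, hv⟩
        · rintro ⟨hp, hbb⟩
          refine ⟨hp, funext fun v => ?_⟩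
          rw [hbb v.1 v.2]
          simp only [dif_pos v.2]
      · refine le_of_eq ?_
        rw [Finset.sum_const, card_univ, Fintype.card_fun, Fintype.card_coe,
          Fintype.card_fin, smul_eq_mul]
    exact absurd hB (not_lt.mpr hle)
  obtain ⟨q, hq⟩ := hqex
  -- domains
  have hdomnat : ∀ (e'' : Finset V) (i : Fin k),
      pmDom (fun v => if v ∈ e'' then some i else none) = e'' := by
    intro e'' i
    ext v
    simp only [pmDom, Finset.mem_filter, Finset.mem_univ, true_and]
    by_cases hv : v ∈ e'' <;> simp [hv]
  have hdomΦ : ∀ i : Fin k,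
      pmDom (fun v => if v ∈ e then some (q v + i) else none) = e := by
    intro i
    ext v
    simp only [pmDom, Finset.mem_filter, Finset.mem_univ, true_and]
    by_cases hv : v ∈ e <;> simp [hv]
  have hmemnat : ∀ φ : V → Option (Fin k), φ ∈ natCover (E.erase e) k ↔
      ∃ e'' ∈ E.erase e, ∃ i : Fin k,
        φ = fun v => if v ∈ e'' then some i else none := by
    intro φ
    simp only [natCover, Finset.mem_biUnion, Finset.mem_image, Finset.mem_univ, true_and]
    constructor
    · rintro ⟨e'', he'', i, rfl⟩
      exact ⟨e'', he'', i, rfl⟩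
    · rintro ⟨e'', he'', i, rfl⟩
      exact ⟨e'', he'', i, rfl⟩
  have hcover : IsCover E k (natCover (E.erase e) k ∪ (univ : Finset (Fin k)).image
      (fun i => fun v => if v ∈ e then some (q v + i) else none)) := by
    constructor
    · intro φ hφ
      rcases Finset.mem_union.mp hφ with h | h
      · obtain ⟨e'', he'', i, rfl⟩ := (hmemnat φ).mp h
        rw [hdomnat]
        exact mem_of_mem_erase he''
      · obtain ⟨i, -, rfl⟩ := Finset.mem_image.mp h
        rw [hdomΦ]
        exact he
    · intro φ hφ ψ hψ hnee hdom v c hφv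
      rcases Finset.mem_union.mp hφ with h | h <;> rcases Finset.mem_union.mp hψ with h' | h'
      · obtain ⟨e1, he1, i, rfl⟩ := (hmemnat φ).mp h
        obtain ⟨e2, he2', j, rfl⟩ := (hmemnat ψ).mp h'
        rw [hdomnat, hdomnat] at hdom
        subst hdom
        have hij : i ≠ j := by
          rintro rfl
          exact hnee rfl
        by_cases hv : v ∈ e1
        · simp only [if_pos hv] at hφv ⊢
          intro hcc
          exact hij ((Option.some.inj hφv).trans (Option.some.inj hcc).symm)
        · simp only [if_neg hv] at hφv
          exact nomatch hφv
      · obtain ⟨e1, he1, i, rfl⟩ := (hmemnat φ).mp h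
        obtain ⟨j, -, rfl⟩ := Finset.mem_image.mp h'
        rw [hdomnat, hdomΦ] at hdom
        exact absurd hdom (Finset.ne_of_mem_erase he1)
      · obtain ⟨j, -, rfl⟩ := Finset.mem_image.mp h
        obtain ⟨e1, he1, i, rfl⟩ := (hmemnat ψ).mp h'
        rw [hdomΦ, hdomnat] at hdom
        exact absurd hdom.symm (Finset.ne_of_mem_erase he1)
      · obtain ⟨i, -, rfl⟩ := Finset.mem_image.mp h
        obtain ⟨j, -, rfl⟩ := Finset.mem_image.mp h'
        have hij : i ≠ j := by
          rintro rfl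
          exact hnee rfl
        by_cases hv : v ∈ e
        · simp only [if_pos hv] at hφv ⊢
          intro hcc
          exact hij ((add_right_inj (a := q v) (G := Fin k)).mp
            ((Option.some.inj hφv).trans (Option.some.inj hcc).symm))
        · simp only [if_neg hv] at hφv
          exact nomatch hφv
  -- SubMap characterizations
  have hsub1 : ∀ (f : V → Fin k) (e'' : Finset V) (i : Fin k),
      SubMap (fun v => if v ∈ e'' then some i else none) f ↔ ∀ v ∈ e'', f v = i := by
    intro f e'' i
    constructor
    · intro hs v hv
      exact hs v i (by simp only [if_pos hv])
    · intro hall v c hc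
      by_cases hv : v ∈ e''
      · simp only [if_pos hv] at hc
        rw [hall v hv]
        exact Option.some.inj hc
      · simp only [if_neg hv] at hc
        exact nomatch hc
  have hsub2 : ∀ (f : V → Fin k) (i : Fin k),
      SubMap (fun v => if v ∈ e then some (q v + i) else none) f ↔
        ∀ v ∈ e, f v = q v + i := by
    intro f i
    constructor
    · intro hs v hv
      exact hs v _ (by simp only [if_pos hv])
    · intro hall v c hc
      by_cases hv : v ∈ e
      · simp only [if_pos hv] at hc
        rw [hall v hv]
        exact Option.some.inj hc
      · simp only [if_neg hv] at hc
        exact nomatch hc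
  -- avoidance characterization
  have hav : ∀ f : V → Fin k, (∀ φ ∈ (natCover (E.erase e) k ∪
        (univ : Finset (Fin k)).image
          (fun i => fun v => if v ∈ e then some (q v + i) else none)), ¬ SubMap φ f) ↔
      (ProperColoring (E.erase e) k f ∧ ¬ ∃ i : Fin k, ∀ v ∈ e, f v = q v + i) := by
    intro f
    constructor
    · intro h
      constructor
      · intro e'' he''
        have hne'' : e''.Nonempty := Finset.card_pos.mp
          (lt_of_lt_of_le (by norm_num) (hE e'' (mem_of_mem_erase he'')))
        obtain ⟨u₀, hu₀⟩ := hne''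
        have hni : ¬ ∀ v ∈ e'', f v = f u₀ := by
          have hh := h (fun v => if v ∈ e'' then some (f u₀) else none)
            (Finset.mem_union_left _ ((hmemnat _).mpr ⟨e'', he'', f u₀, rfl⟩))
          rw [hsub1 f e'' (f u₀)] at hh
          exact hh
        push_neg at hni
        obtain ⟨v, hv, hvne⟩ := hni
        exact ⟨v, hv, u₀, hu₀, hvne⟩
      · rintro ⟨i, hall⟩
        have hh := h (fun v => if v ∈ e then some (q v + i) else none)
          (Finset.mem_union_right _ (Finset.mem_image.mpr ⟨i, mem_univ i, rfl⟩))
        rw [hsub2 f i] at hh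
        exact hh hall
    · rintro ⟨hp, hni⟩ φ hφ
      rcases Finset.mem_union.mp hφ with hmem | hmem
      · obtain ⟨e'', he'', i, rfl⟩ := (hmemnat φ).mp hmem
        rw [hsub1]
        intro hall
        obtain ⟨u, hu, v, hv, hne2⟩ := hp e'' he''
        exact hne2 (by rw [hall u hu, hall v hv])
      · obtain ⟨i, -, rfl⟩ := Finset.mem_image.mp hmem
        rw [hsub2]
        intro hall
        exact hni ⟨i, hall⟩
  -- matcher count
  have hmatch : ((univ.filter fun f : V → Fin k =>
      ProperColoring (E.erase e) k f).filter fun f =>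
        ∃ i : Fin k, ∀ v ∈ e, f v = q v + i).card
      = k * patCnt (E.erase e) k e q := by
    rw [Finset.card_eq_sum_card_fiberwise (f := fun f : V → Fin k => f v₀ - q v₀)
      (t := (univ : Finset (Fin k))) (fun _ _ => mem_univ _)]
    trans (∑ _i : Fin k, patCnt (E.erase e) k e q)
    · refine Finset.sum_congr rfl fun i _ => ?_
      rw [← patCnt_shift (E.erase e) k e q i]
      unfold patCnt
      congr 1
      ext f
      simp only [Finset.mem_filter, Finset.mem_univ, true_and]
      constructor
      · rintro ⟨⟨hp, i', hi'⟩, hvi⟩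
        have hii : i' = i := by
          rw [← hvi, hi' v₀ hv₀]
          exact (add_sub_cancel_left (G := Fin k) _ _).symm
        exact ⟨hp, fun v hv => by rw [hi' v hv, hii]⟩
      · rintro ⟨hp, hall⟩
        refine ⟨⟨hp, i, fun v hv => hall v hv⟩, ?_⟩
        rw [hall v₀ hv₀]
        exact add_sub_cancel_left (G := Fin k) _ _
    · rw [Finset.sum_const, card_univ, Fintype.card_fin, smul_eq_mul]
  -- dpCount + k * beta = P'
  have hdpc : dpCount k (natCover (E.erase e) k ∪ (univ : Finset (Fin k)).image
        (fun i => fun v => if v ∈ e then some (q v + i) else none))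
      + k * patCnt (E.erase e) k e q = chromPoly (E.erase e) k := by
    have h0 : (univ.filter fun f : V → Fin k => ∀ φ ∈ (natCover (E.erase e) k ∪
          (univ : Finset (Fin k)).image
            (fun i => fun v => if v ∈ e then some (q v + i) else none)), ¬ SubMap φ f)
        = (univ.filter fun f : V → Fin k =>
            ProperColoring (E.erase e) k f).filter fun f =>
              ¬ ∃ i : Fin k, ∀ v ∈ e, f v = q v + i := by
      ext f
      simp only [Finset.mem_filter, Finset.mem_univ, true_and]
      exact hav f
    have h1 := Finset.card_filter_add_card_filter_not
      (s := univ.filter fun f : V → Fin k => ProperColoring (E.erase e) k f)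
      (p := fun f : V → Fin k => ∃ i : Fin k, ∀ v ∈ e, f v = q v + i)
    rw [dpCount_eq_card, chromPoly_eq_card, h0, ← h1, hmatch]
    exact Nat.add_comm _ _
  have hle : dpPoly E k ≤ dpCount k (natCover (E.erase e) k ∪ (univ : Finset (Fin k)).image
      (fun i => fun v => if v ∈ e then some (q v + i) else none)) :=
    Nat.sInf_le ⟨_, hcover, rfl⟩
  have hmul : k * patCnt (E.erase e) k e (fun _ => (0 : Fin k)) + k
      ≤ k * patCnt (E.erase e) k e q := by
    calc k * patCnt (E.erase e) k e (fun _ => (0 : Fin k)) + k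
        = k * (patCnt (E.erase e) k e (fun _ => (0 : Fin k)) + 1) := by ring
      _ ≤ k * patCnt (E.erase e) k e q := Nat.mul_le_mul_left k hq
  clear * - hA hdpc hle hmul hk
  omega
end
end

section
/- Let H be a hypergraph on n vertices and M = K₁ ∨ H the join of H with a single vertex w. Let F be a perfect k-fold cover of M (every edge has exactly k partial maps), with level structure Φ = {Φ_j : j ∈ [k]} where Φ_j collects, for each vertex v_i of H, the partial map on edge {w, v_i} assigning j to w. If at least k − 1 of the Φ_j are level mappings, then all k are level mappings, there is a bijection between F-colorings of M and proper k-colorings of M, and hence P_{DP}(M, F) = P(M, k). -/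
/-
Common definitions: a hypergraph on a finite vertex type `V` is given by its
edge set `E : Finset (Finset V)` (each edge of size ≥ 2).
-/

noncomputable section
open Finset

attribute [local instance] Classical.propDecidable

variable {V : Type*}

lemma mem_pmDom' [Fintype V] {k : ℕ} {φ : V → Option (Fin k)} {x : V} :
    x ∈ pmDom φ ↔ (φ x).isSome := by simp [pmDom]

/-- for a perfect `k`-fold cover `F` of `M = K₁ ∨ H` (normalized so the
cover map on `{w, v}` indexed by `j` sends `w` to `j`), if at least `k-1` of the `Φ_j`
are level mappings, then all of them are, and the number of `F`-colorings of `M`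
equals the number of proper `k`-colorings of `M`, i.e. `P_DP(M,F) = P(M,k)`. -/
theorem stmt15 [Fintype V] [DecidableEq V] (E : Finset (Finset V))
    (hE : ∀ e ∈ E, 2 ≤ e.card) (k : ℕ) (hk : 0 < k)
    (F : Finset (Option V → Option (Fin k)))
    (hcov : IsCover (joinOne E) k F)
    (hperf : ∀ e ∈ joinOne E, (F.filter fun φ => pmDom φ = e).card = k)
    (hnorm : ∀ (j : Fin k) (v : V),
      ∃ φ ∈ F, pmDom φ = ({none, some v} : Finset (Option V)) ∧ φ none = some j)
    (hlevel : ∃ j₀ : Fin k, ∀ j : Fin k, j ≠ j₀ → LevelMap E k F j) :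
    (∀ j : Fin k, LevelMap E k F j) ∧ dpCount k F = chromPoly (joinOne E) k := by
  classical
  obtain ⟨hdomE, hdisj⟩ := hcov
  choose Φ hΦF hΦdom hΦnone using hnorm
  -- uniqueness of the cover map on {none, some v} with value j at none
  have huniq : ∀ (j : Fin k) (v : V) (φ : Option V → Option (Fin k)), φ ∈ F →
      pmDom φ = ({none, some v} : Finset (Option V)) → φ none = some j → φ = Φ j v := by
    intro j v φ hφ hdom hval
    by_contra hne
    exact hdisj φ hφ (Φ j v) (hΦF j v) hne (hdom.trans (hΦdom j v).symm) none j hval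
      (hΦnone j v)
  have hsomev : ∀ (j : Fin k) (v : V), (Φ j v (some v)).isSome := by
    intro j v
    have h : some v ∈ pmDom (Φ j v) := by rw [hΦdom]; simp
    rwa [mem_pmDom'] at h
  set π : V → Fin k → Fin k := fun v j => (Φ j v (some v)).get (hsomev j v) with hπdef
  have hπ : ∀ (v : V) (j : Fin k), Φ j v (some v) = some (π v j) :=
    fun v j => (Option.some_get (hsomev j v)).symm
  have hπinj : ∀ v : V, Function.Injective (π v) := by
    intro v j j' h
    by_contra hne
    have hneΦ : Φ j v ≠ Φ j' v := by
      intro heq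
      apply hne
      have h1 := hΦnone j v
      rw [heq, hΦnone j' v] at h1
      exact (Option.some_injective _ h1.symm)
    exact hdisj (Φ j v) (hΦF j v) (Φ j' v) (hΦF j' v) hneΦ
      ((hΦdom j v).trans (hΦdom j' v).symm) (some v) (π v j) (hπ v j)
      (by rw [hπ v j', h])
  have hπbij : ∀ v : V, Function.Bijective (π v) :=
    fun v => Finite.injective_iff_bijective.mp (hπinj v)
  have hmemE1 : ∀ e ∈ E, e.image some ∈ joinOne E := by
    intro e he
    exact mem_union_left _ (mem_image_of_mem _ he)
  have hmemE2 : ∀ v : V, ({none, some v} : Finset (Option V)) ∈ joinOne E := by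
    intro v
    exact mem_union_right _ (mem_image_of_mem _ (mem_univ v))
  -- converting level maps to value form
  have hLMtoLV : ∀ j : Fin k, LevelMap E k F j → ∀ e ∈ E,
      ∃ ψ ∈ F, pmDom ψ = e.image some ∧ ∀ v ∈ e, ψ (some v) = some (π v j) := by
    intro j hlm e he
    obtain ⟨ψ, hψF, hψdom, hψ⟩ := hlm e he
    exact ⟨ψ, hψF, hψdom, fun v hv =>
      (hψ v hv (Φ j v) (hΦF j v) ⟨hΦdom j v, hΦnone j v⟩).trans (hπ v j)⟩
  -- key counting step: value form holds for every level j
  have hLV : ∀ (j : Fin k) (e : Finset V), e ∈ E → ∃ ψ ∈ F, pmDom ψ = e.image some ∧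
      ∀ v ∈ e, ψ (some v) = some (π v j) := by
    obtain ⟨j₀, hj₀⟩ := hlevel
    intro j e he
    by_cases hjj : j = j₀
    · subst hjj
      obtain ⟨v₀, hv₀⟩ := Finset.card_pos.mp (lt_of_lt_of_le (by norm_num) (hE e he))
      choose ψf hψF hψdom hψval using
        fun (p : {j' : Fin k // j' ≠ j}) => hLMtoLV p.1 (hj₀ p.1 p.2) e he
      have hinj : Function.Injective ψf := by
        intro a b hab
        have ha := hψval a v₀ hv₀
        have hb := hψval b v₀ hv₀
        rw [hab, hb] at ha
        exact Subtype.ext (hπinj v₀ (Option.some_injective _ ha)).symm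
      set S := F.filter (fun ψ => pmDom ψ = e.image some) with hSdef
      have hScard : S.card = k := hperf _ (hmemE1 e he)
      set T := Finset.univ.image ψf with hTdef
      have hTS : T ⊆ S := by
        intro ψ hψ
        obtain ⟨p, _, rfl⟩ := Finset.mem_image.mp hψ
        exact Finset.mem_filter.mpr ⟨hψF p, hψdom p⟩
      have hTcard : T.card < k := by
        rw [hTdef, Finset.card_image_of_injective _ hinj, Finset.card_univ]
        have h := Fintype.card_subtype_lt (p := fun j' : Fin k => j' ≠ j) (x := j) (by simp)
        simpa using h
      have hns : ¬ S ⊆ T := fun hsub =>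
        absurd (Finset.card_le_card hsub) (by rw [hScard]; exact not_le.mpr hTcard)
      obtain ⟨ψ₀, hψ₀S, hψ₀T⟩ := Finset.not_subset.mp hns
      obtain ⟨hψ₀F, hψ₀dom⟩ := Finset.mem_filter.mp hψ₀S
      refine ⟨ψ₀, hψ₀F, hψ₀dom, fun v hv => ?_⟩
      have hvd : (ψ₀ (some v)).isSome := by
        rw [← mem_pmDom', hψ₀dom]; exact mem_image_of_mem _ hv
      obtain ⟨c, hc⟩ := Option.isSome_iff_exists.mp hvd
      obtain ⟨j', hj'⟩ := (hπbij v).2 c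
      have hjeq : j' = j := by
        by_contra hne
        have hmem : ψf ⟨j', hne⟩ ∈ T := Finset.mem_image_of_mem _ (Finset.mem_univ _)
        have hne2 : ψf ⟨j', hne⟩ ≠ ψ₀ := fun h => hψ₀T (h ▸ hmem)
        exact hdisj (ψf ⟨j', hne⟩) (hψF _) ψ₀ hψ₀F hne2
          ((hψdom _).trans hψ₀dom.symm) (some v) c
          (by rw [hψval ⟨j', hne⟩ v hv, hj']) hc
      rw [hc, ← hj', hjeq]
    · exact hLMtoLV j (hj₀ j hjj) e he
  -- part 1: all levels are level maps
  have part1 : ∀ j : Fin k, LevelMap E k F j := by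
    intro j e he
    obtain ⟨ψ, hψF, hψdom, hψv⟩ := hLV j e he
    refine ⟨ψ, hψF, hψdom, fun v hv φ hφ h => ?_⟩
    obtain ⟨hd, hn⟩ := h
    have hφeq : φ = Φ j v := huniq j v φ hφ hd hn
    rw [hψv v hv, hφeq, hπ v j]
  refine ⟨part1, ?_⟩
  -- part 2: count equality
  choose Ψ hΨF hΨdom hΨval using hLV
  have hsurj : ∀ (e : Finset V) (he : e ∈ E), ∀ ψ ∈ F, pmDom ψ = e.image some →
      ∃ j : Fin k, ψ = Ψ j e he := by
    intro e he ψ hψF hψdom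
    obtain ⟨v₀, hv₀⟩ := Finset.card_pos.mp (lt_of_lt_of_le (by norm_num) (hE e he))
    have hinj : Function.Injective (fun j => Ψ j e he) := by
      intro a b hab
      have ha := hΨval a e he v₀ hv₀
      have hb := hΨval b e he v₀ hv₀
      simp only at hab
      rw [hab, hb] at ha
      exact (hπinj v₀ (Option.some_injective _ ha)).symm
    set S := F.filter (fun ψ => pmDom ψ = e.image some) with hSdef
    have hScard : S.card = k := hperf _ (hmemE1 e he)
    set T := Finset.univ.image (fun j => Ψ j e he) with hTdef
    have hTS : T ⊆ S := by
      intro φ hφ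
      obtain ⟨j, _, rfl⟩ := Finset.mem_image.mp hφ
      exact Finset.mem_filter.mpr ⟨hΨF j e he, hΨdom j e he⟩
    have hTeq : T = S := Finset.eq_of_subset_of_card_le hTS (by
      rw [hScard, hTdef, Finset.card_image_of_injective _ hinj, Finset.card_univ,
        Fintype.card_fin])
    have hψS : ψ ∈ S := Finset.mem_filter.mpr ⟨hψF, hψdom⟩
    rw [← hTeq] at hψS
    obtain ⟨j, _, hj⟩ := Finset.mem_image.mp hψS
    exact ⟨j, hj.symm⟩
  -- SubMap characterizations
  have hsubΦ : ∀ (j : Fin k) (v : V) (f : Option V → Fin k),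
      SubMap (Φ j v) f ↔ (f none = j ∧ f (some v) = π v j) := by
    intro j v f
    constructor
    · intro h
      exact ⟨h none j (hΦnone j v), h (some v) (π v j) (hπ v j)⟩
    · rintro ⟨h1, h2⟩ x c hx
      have hxdom : x ∈ pmDom (Φ j v) := mem_pmDom'.mpr (by rw [hx]; rfl)
      rw [hΦdom] at hxdom
      simp only [Finset.mem_insert, Finset.mem_singleton] at hxdom
      rcases hxdom with rfl | rfl
      · rw [hΦnone] at hx
        rw [h1, Option.some_injective _ hx]
      · rw [hπ] at hx
        rw [h2, Option.some_injective _ hx]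
  have hsubΨ : ∀ (j : Fin k) (e : Finset V) (he : e ∈ E) (f : Option V → Fin k),
      SubMap (Ψ j e he) f ↔ ∀ v ∈ e, f (some v) = π v j := by
    intro j e he f
    constructor
    · intro h v hv
      exact h (some v) (π v j) (hΨval j e he v hv)
    · intro h x c hx
      have hxdom : x ∈ pmDom (Ψ j e he) := mem_pmDom'.mpr (by rw [hx]; rfl)
      rw [hΨdom] at hxdom
      obtain ⟨v, hv, rfl⟩ := Finset.mem_image.mp hxdom
      have := hΨval j e he v hv
      rw [this] at hx
      rw [h v hv, Option.some_injective _ hx]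
  -- the equivalence of colorings
  let eqv : V → (Fin k ≃ Fin k) := fun v => Equiv.ofBijective _ (hπbij v)
  have heqv : ∀ (v : V) (j : Fin k), eqv v j = π v j := fun v j => rfl
  let bigE : (Option V → Fin k) ≃ (Option V → Fin k) :=
    { toFun := fun f x => match x with
        | none => f none
        | some v => (eqv v).symm (f (some v))
      invFun := fun g x => match x with
        | none => g none
        | some v => eqv v (g (some v))
      left_inv := by intro f; funext x; cases x <;> simp
      right_inv := by intro g; funext x; cases x <;> simp }
  have hgnone : ∀ f : Option V → Fin k, bigE f none = f none := fun f => rfl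
  have hgsome : ∀ (f : Option V → Fin k) (v : V) (j : Fin k),
      bigE f (some v) = j ↔ f (some v) = π v j := by
    intro f v j
    show (eqv v).symm (f (some v)) = j ↔ _
    rw [Equiv.symm_apply_eq, heqv]
  have main : ∀ f : Option V → Fin k,
      (∀ φ ∈ F, ¬ SubMap φ f) ↔ ProperColoring (joinOne E) k (bigE f) := by
    intro f
    constructor
    · intro h d hd
      simp only [joinOne, Finset.mem_union, Finset.mem_image, Finset.mem_univ,
        true_and] at hd
      by_contra hcon
      push_neg at hcon
      rcases hd with ⟨e, he, rfl⟩ | ⟨v, rfl⟩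
      · obtain ⟨v₀, hv₀⟩ := Finset.card_pos.mp (lt_of_lt_of_le (by norm_num) (hE e he))
        set j := bigE f (some v₀) with hjdef
        apply h (Ψ j e he) (hΨF j e he)
        rw [hsubΨ]
        intro v hv
        rw [← (hgsome f v j)]
        exact hcon (some v) (mem_image_of_mem _ hv) (some v₀) (mem_image_of_mem _ hv₀)
      · set j := f none with hjdef
        apply h (Φ j v) (hΦF j v)
        rw [hsubΦ]
        refine ⟨rfl, ?_⟩
        rw [← (hgsome f v j)]
        have hx := hcon (some v) (by simp) none (by simp)
        rw [hx, hgnone]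
    · intro hp φ hφ hsub
      have hd := hdomE φ hφ
      simp only [joinOne, Finset.mem_union, Finset.mem_image, Finset.mem_univ,
        true_and] at hd
      rcases hd with ⟨e, he, hde⟩ | ⟨v, hdv⟩
      · obtain ⟨j, rfl⟩ := hsurj e he φ hφ hde.symm
        have hval := (hsubΨ j e he f).mp hsub
        obtain ⟨u, hu, w, hw, huw⟩ := hp _ (hmemE1 e he)
        obtain ⟨vu, hvu, rfl⟩ := Finset.mem_image.mp hu
        obtain ⟨vw, hvw, rfl⟩ := Finset.mem_image.mp hw
        apply huw
        rw [(hgsome f vu j).mpr (hval vu hvu), (hgsome f vw j).mpr (hval vw hvw)]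
      · have hnone : (φ none).isSome := by
          rw [← mem_pmDom', ← hdv]; simp
        obtain ⟨j, hj⟩ := Option.isSome_iff_exists.mp hnone
        have hφeq : φ = Φ j v := huniq j v φ hφ hdv.symm hj
        subst hφeq
        obtain ⟨h1, h2⟩ := (hsubΦ j v f).mp hsub
        obtain ⟨u, hu, w, hw, huw⟩ := hp _ (hmemE2 v)
        have hall : ∀ x ∈ ({none, some v} : Finset (Option V)), bigE f x = j := by
          intro x hx
          simp only [Finset.mem_insert, Finset.mem_singleton] at hx
          rcases hx with rfl | rfl
          · rw [hgnone, h1]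
          · exact (hgsome f v j).mpr h2
        exact huw ((hall u hu).trans (hall w hw).symm)
  unfold dpCount chromPoly
  exact Nat.card_congr (Equiv.subtypeEquiv bigE main)
end
end
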